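/- arXiv:1506.04459 — 3 statements merged into one kernel-verified Lean document; each statement's English description precedes it below -/
import Mathlib

section
/- Let D be a primitive digraph of order n ≥ 3. Then exp(D) = (n−1)² + 1 if and only if D is isomorphic to D_1, where D_1 consists of the standard n-cycle 𝒞 (arcs v_{i+1} → v_i for 1 ≤ i ≤ n−1 together with the arc v_1 → v_n) plus the extra arc v_1 → v_{n−1}. -/
variable {V : Type*}

/-- There is a directed walk of length `k` from `u` to `v` in the digraph `D`. -/
def HasWalk (D : V → V → Prop) : ℕ → V → V → Prop
  | 0, u, v => u = v
  | k + 1, u, v => ∃ w, D u w ∧ HasWalk D k w v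

/-- A digraph is primitive if there is `k ≥ 1` such that every ordered pair of
vertices is joined by a walk of length exactly `k`. -/
def IsPrimitive (D : V → V → Prop) : Prop :=
  ∃ k, 1 ≤ k ∧ ∀ u v, HasWalk D k u v

/-- The exponent of a primitive digraph: the least `k ≥ 1` such that every ordered
pair of vertices is joined by a walk of length exactly `k`. -/
noncomputable def expnt (D : V → V → Prop) : ℕ :=
  sInf {k | 1 ≤ k ∧ ∀ u v, HasWalk D k u v}

/-- `D` has a (directed) cycle of length `ℓ`: a closed walk `f 0, f 1, …, f (ℓ-1), f 0`
whose vertices `f 0, …, f (ℓ-1)` are pairwise distinct. -/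
def HasCycleOfLength (D : V → V → Prop) (ℓ : ℕ) : Prop :=
  0 < ℓ ∧ ∃ f : ℕ → V,
    (∀ i < ℓ, ∀ j < ℓ, f i = f j → i = j) ∧
    (∀ i, i + 1 < ℓ → D (f i) (f (i + 1))) ∧
    D (f (ℓ - 1)) (f 0)

/-- The set of cycle lengths of `D`, usually denoted `C(D)`. -/
def cycleLengths (D : V → V → Prop) : Set ℕ := {ℓ | HasCycleOfLength D ℓ}

/-- The girth of `D`: the length of its shortest cycle. -/
noncomputable def girth (D : V → V → Prop) : ℕ := sInf (cycleLengths D)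

/-- `D` is isomorphic to `E`. -/
def DigraphIso {W : Type*} (D : V → V → Prop) (E : W → W → Prop) : Prop :=
  ∃ e : V ≃ W, ∀ u v, D u v ↔ E (e u) (e v)

/-- The standard `n`-cycle `𝒞 = (v_n, v_{n-1}, …, v_2, v_1, v_n)` on `Fin n`
(vertex `v_i` is index `i - 1`): arcs `v_{i+1} → v_i` for `1 ≤ i ≤ n - 1`
together with the arc `v_1 → v_n`. -/
def stdCycleRev (n : ℕ) : Fin n → Fin n → Prop :=
  fun a b => (a : ℕ) = (b : ℕ) + 1 ∨ ((a : ℕ) = 0 ∧ (b : ℕ) = n - 1)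

/-- `D_1`: the standard `n`-cycle plus the extra arc `v_1 → v_{n-1}`. -/
def D1 (n : ℕ) : Fin n → Fin n → Prop :=
  fun a b => stdCycleRev n a b ∨ ((a : ℕ) = 0 ∧ (b : ℕ) = n - 2)

/-- `D_2`: `D_1` plus the extra arc `v_2 → v_n`. -/
def D2 (n : ℕ) : Fin n → Fin n → Prop :=
  fun a b => D1 n a b ∨ ((a : ℕ) = 1 ∧ (b : ℕ) = n - 1)









section S0
variable {W : Type*} {D : V → V → Prop} {E : V → V → Prop}

theorem walk_zero {u v : V} (h : HasWalk D 0 u v) : u = v := h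

theorem walk_single {u v : V} (h : D u v) : HasWalk D 1 u v := ⟨v, h, rfl⟩

theorem walk_append {j k : ℕ} {u w v : V} (h1 : HasWalk D j u w) (h2 : HasWalk D k w v) :
    HasWalk D (j + k) u v := by
  induction j generalizing u with
  | zero => cases h1; simpa using h2
  | succ j ih =>
    obtain ⟨z, hz, hw⟩ := h1
    have : j + 1 + k = (j + k) + 1 := by omega
    rw [this]
    exact ⟨z, hz, ih hw⟩

theorem walk_split {j k : ℕ} {u v : V} (h : HasWalk D (j + k) u v) :
    ∃ w, HasWalk D j u w ∧ HasWalk D k w v := by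
  induction j generalizing u with
  | zero => exact ⟨u, rfl, by simpa using h⟩
  | succ j ih =>
    have : j + 1 + k = (j + k) + 1 := by omega
    rw [this] at h
    obtain ⟨z, hz, hw⟩ := h
    obtain ⟨w, hw1, hw2⟩ := ih hw
    exact ⟨w, ⟨z, hz, hw1⟩, hw2⟩

theorem walk_mono (hle : ∀ a b, D a b → E a b) {k : ℕ} {u v : V} (h : HasWalk D k u v) :
    HasWalk E k u v := by
  induction k generalizing u with
  | zero => exact h
  | succ k ih => obtain ⟨w, hw, h2⟩ := h; exact ⟨w, hle _ _ hw, ih h2⟩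

theorem walk_map {W : Type*} {D : V → V → Prop} {E : W → W → Prop} (F : V → W)
    (hF : ∀ a b, D a b → E (F a) (F b)) {k : ℕ} {u v : V} (h : HasWalk D k u v) :
    HasWalk E k (F u) (F v) := by
  induction k generalizing u with
  | zero => cases h; rfl
  | succ k ih => obtain ⟨w, hw, h2⟩ := h; exact ⟨F w, hF _ _ hw, ih h2⟩

theorem walk_flip {k : ℕ} {u v : V} (h : HasWalk D k u v) :
    HasWalk (fun a b => D b a) k v u := by
  induction k generalizing u with
  | zero => cases h; rfl
  | succ k ih =>
    obtain ⟨w, hw, h2⟩ := h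
    have : k + 1 = k + 1 := rfl
    have h3 := ih h2
    have : HasWalk (fun a b => D b a) 1 w u := walk_single hw
    have := walk_append h3 this
    rwa [Nat.add_comm] at this ⊢

/-- walk as a function on `ℕ` -/
theorem walk_iff_fun {k : ℕ} {u v : V} :
    HasWalk D k u v ↔ ∃ g : ℕ → V, g 0 = u ∧ g k = v ∧ ∀ i < k, D (g i) (g (i + 1)) := by
  constructor
  · intro h
    induction k generalizing u with
    | zero => exact ⟨fun _ => u, rfl, h ▸ rfl, by omega⟩
    | succ k ih =>
      obtain ⟨w, hw, h2⟩ := h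
      obtain ⟨g, hg0, hgk, hga⟩ := ih h2
      refine ⟨fun m => if m = 0 then u else g (m - 1), by simp, by simp [hgk], ?_⟩
      intro i hi
      rcases Nat.eq_zero_or_pos i with rfl | hpos
      · simpa [hg0] using hw
      · have h1 : ¬ (i = 0) := by omega
        have h2 : ¬ (i + 1 = 0) := by omega
        simp only [h1, h2, if_false]
        have : i - 1 + 1 = i + 1 - 1 := by omega
        rw [← this]
        exact hga _ (by omega)
  · rintro ⟨g, rfl, rfl, hga⟩
    induction k generalizing g with
    | zero => rfl
    | succ k ih =>
      refine ⟨g 1, hga 0 (by omega), ?_⟩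
      have := ih (fun m => g (m + 1)) (fun i hi => hga (i + 1) (by omega))
      simpa using this

/-- cut a repeated segment out of a walk -/
theorem walk_cut {k : ℕ} (g : ℕ → V) (hga : ∀ i < k, D (g i) (g (i + 1)))
    {i j : ℕ} (hij : i < j) (hjk : j ≤ k) (heq : g i = g j) :
    HasWalk D (k - (j - i)) (g 0) (g k) := by
  rw [walk_iff_fun]
  refine ⟨fun m => if m ≤ i then g m else g (m + (j - i)), by simp, ?_, ?_⟩
  · by_cases h : k - (j - i) ≤ i
    · have hji : j = k := by omega
      have hki : k - (j - i) = i := by omega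
      rw [hki]
      simp only [le_refl, if_true, heq, hji]
    · simp only [h, if_false]
      congr 1
      omega
  · intro m hm
    rcases lt_trichotomy m i with hlt | rfl | hgt
    · have h1 : m ≤ i := by omega
      have h2 : m + 1 ≤ i := by omega
      simp only [h1, h2, if_true]
      exact hga m (by omega)
    · have h2 : ¬ (m + 1 ≤ m) := by omega
      simp only [le_refl, if_true, h2, if_false, heq]
      have : m + 1 + (j - m) = j + 1 := by omega
      rw [this]
      exact hga j (by omega)
    · have h1 : ¬ (m ≤ i) := by omega
      have h2 : ¬ (m + 1 ≤ i) := by omega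
      simp only [h1, h2, if_false]
      have : m + 1 + (j - i) = m + (j - i) + 1 := by omega
      rw [this]
      exact hga _ (by omega)

end S0







section S1
variable {D : V → V → Prop}

def walkSet (D : V → V → Prop) : Set ℕ := {k | 1 ≤ k ∧ ∀ u v, HasWalk D k u v}

theorem expnt_def (D : V → V → Prop) : expnt D = sInf (walkSet D) := rfl

theorem prim_out (hD : IsPrimitive D) (u : V) : ∃ w, D u w := by
  obtain ⟨k, hk1, hk⟩ := hD
  have h := hk u u
  rcases k with _ | k
  · omega
  · obtain ⟨w, hw, -⟩ := h
    exact ⟨w, hw⟩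

theorem prim_in (hD : IsPrimitive D) (v : V) : ∃ w, D w v := by
  obtain ⟨k, hk1, hk⟩ := hD
  have h := hk v v
  rcases k with _ | k
  · omega
  · have h2 : k + 1 = k + 1 := rfl
    obtain ⟨w, h1, h2⟩ := walk_split (j := k) (k := 1) h
    obtain ⟨z, hz, hz2⟩ := h2
    cases hz2
    exact ⟨w, hz⟩

theorem walkSet_succ (hD : IsPrimitive D) {k : ℕ} (h : k ∈ walkSet D) :
    k + 1 ∈ walkSet D := by
  refine ⟨by omega, fun u v => ?_⟩
  obtain ⟨w, hw⟩ := prim_out hD u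
  exact ⟨w, hw, h.2 w v⟩

theorem walkSet_mono (hD : IsPrimitive D) {k l : ℕ} (h : k ∈ walkSet D) (hkl : k ≤ l) :
    l ∈ walkSet D := by
  obtain ⟨m, rfl⟩ := Nat.exists_eq_add_of_le hkl
  clear hkl
  induction m with
  | zero => exact h
  | succ m ih => exact walkSet_succ hD ih

theorem expnt_le {k : ℕ} (h : k ∈ walkSet D) : expnt D ≤ k := Nat.sInf_le h

theorem expnt_mem (hD : IsPrimitive D) : expnt D ∈ walkSet D :=
  Nat.sInf_mem (s := walkSet D) hD

theorem expnt_eq_of (hD : IsPrimitive D) {N : ℕ} (h2 : 2 ≤ N) (hmem : N ∈ walkSet D)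
    (hnot : ¬ (N - 1) ∈ walkSet D) : expnt D = N := by
  refine le_antisymm (expnt_le hmem) ?_
  by_contra hlt
  push_neg at hlt
  have h1 := expnt_mem hD
  have := walkSet_mono hD h1 (show expnt D ≤ N - 1 by have := h1.1; omega)
  exact hnot this

theorem prim_flip (hD : IsPrimitive D) : IsPrimitive (fun a b => D b a) := by
  obtain ⟨k, hk1, hk⟩ := hD
  exact ⟨k, hk1, fun u v => walk_flip (hk v u)⟩

section iso
variable {W : Type*} {E : W → W → Prop}

theorem iso_walk (e : V ≃ W) (he : ∀ u v, D u v ↔ E (e u) (e v)) {k : ℕ} {u v : V} :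
    HasWalk D k u v ↔ HasWalk E k (e u) (e v) := by
  constructor
  · exact walk_map e (fun a b h => (he a b).mp h)
  · intro h
    have := walk_map e.symm (D := E) (E := D)
      (fun a b h => by
        have := (he (e.symm a) (e.symm b)).mpr
        simp only [Equiv.apply_symm_apply] at this
        exact this h) h
    simpa using this

theorem iso_walkSet (e : V ≃ W) (he : ∀ u v, D u v ↔ E (e u) (e v)) :
    walkSet D = walkSet E := by
  ext k
  constructor
  · rintro ⟨h1, h⟩
    refine ⟨h1, fun u v => ?_⟩
    have := (iso_walk e he).mp (h (e.symm u) (e.symm v))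
    simpa using this
  · rintro ⟨h1, h⟩
    exact ⟨h1, fun u v => (iso_walk e he).mpr (h (e u) (e v))⟩

theorem iso_expnt (h : DigraphIso D E) : expnt D = expnt E := by
  obtain ⟨e, he⟩ := h
  rw [expnt_def, expnt_def, iso_walkSet e he]

theorem iso_prim (h : DigraphIso D E) (hD : IsPrimitive D) : IsPrimitive E := by
  obtain ⟨e, he⟩ := h
  obtain ⟨k, hk⟩ := hD
  have : k ∈ walkSet E := iso_walkSet e he ▸ hk
  exact ⟨k, this⟩

end iso
end S1






section S2
variable {n : ℕ}

theorem cyc_walk (hn : 1 ≤ n) : ∀ (k : ℕ) (a b : Fin n),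
    (∃ q, (b : ℕ) + k = (a : ℕ) + q * n) → HasWalk (stdCycleRev n) k a b := by
  intro k
  induction k with
  | zero =>
    rintro a b ⟨q, hq⟩
    have hb := b.isLt
    have ha := a.isLt
    have hq0 : q = 0 := by
      rcases q with _ | q
      · rfl
      · exfalso
        have : n ≤ (q + 1) * n := by
          have : 1 * n ≤ (q+1) * n := Nat.mul_le_mul_right n (by omega)
          omega
        omega
    subst hq0
    simp only [Nat.zero_mul, Nat.add_zero] at hq
    show a = b
    exact Fin.ext (by omega)
  | succ k ih =>
    rintro a b ⟨q, hq⟩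
    by_cases ha : (a : ℕ) = 0
    · rw [ha] at hq
      have hq1 : 1 ≤ q := by
        rcases q with _ | q
        · omega
        · omega
      obtain ⟨q', rfl⟩ : ∃ q', q = q' + 1 := ⟨q - 1, by omega⟩
      refine ⟨⟨n - 1, by omega⟩, Or.inr ⟨ha, rfl⟩, ih _ b ⟨q', ?_⟩⟩
      have h1 : (q' + 1) * n = q' * n + n := by ring
      rw [h1] at hq
      show (b : ℕ) + k = (n - 1) + q' * n
      omega
    · refine ⟨⟨(a : ℕ) - 1, by omega⟩, Or.inl (by simp; omega), ih _ b ⟨q, ?_⟩⟩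
      show (b : ℕ) + k = ((a : ℕ) - 1) + q * n
      omega

theorem cyc_le_d1 : ∀ a b : Fin n, stdCycleRev n a b → D1 n a b := fun _ _ h => Or.inl h
theorem d1_le_d2 : ∀ a b : Fin n, D1 n a b → D2 n a b := fun _ _ h => Or.inl h
theorem cyc_le_d2 : ∀ a b : Fin n, stdCycleRev n a b → D2 n a b := fun _ _ h => Or.inl (Or.inl h)

theorem d1_walk_cyc (hn : 1 ≤ n) (k : ℕ) (a b : Fin n)
    (h : ∃ q, (b : ℕ) + k = (a : ℕ) + q * n) : HasWalk (D1 n) k a b :=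
  walk_mono cyc_le_d1 (cyc_walk hn k a b h)

theorem d2_walk_cyc (hn : 1 ≤ n) (k : ℕ) (a b : Fin n)
    (h : ∃ q, (b : ℕ) + k = (a : ℕ) + q * n) : HasWalk (D2 n) k a b :=
  walk_mono cyc_le_d2 (cyc_walk hn k a b h)

theorem d1_arc0 (hn : 3 ≤ n) : D1 n ⟨0, by omega⟩ ⟨n - 2, by omega⟩ := Or.inr ⟨rfl, rfl⟩

theorem d2_arc1 (hn : 3 ≤ n) : D2 n ⟨1, by omega⟩ ⟨n - 1, by omega⟩ := Or.inr ⟨rfl, rfl⟩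

/-- loop of length `n-1` at vertex `0` in `D1` -/
theorem d1_loop0 (hn : 3 ≤ n) : HasWalk (D1 n) (n - 1) (⟨0, by omega⟩ : Fin n) ⟨0, by omega⟩ := by
  have h1 : HasWalk (D1 n) 1 (⟨0, by omega⟩ : Fin n) ⟨n - 2, by omega⟩ :=
    walk_single (d1_arc0 hn)
  have h2 : HasWalk (D1 n) (n - 2) (⟨n - 2, by omega⟩ : Fin n) ⟨0, by omega⟩ :=
    d1_walk_cyc (by omega) _ _ _ ⟨0, by simp⟩
  have := walk_append h1 h2
  have he : 1 + (n - 2) = n - 1 := by omega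
  rwa [he] at this

theorem d1_loops0 (hn : 3 ≤ n) (t : ℕ) :
    HasWalk (D1 n) (t * (n - 1)) (⟨0, by omega⟩ : Fin n) ⟨0, by omega⟩ := by
  induction t with
  | zero => rw [Nat.zero_mul]; show (⟨0, by omega⟩ : Fin n) = _; rfl
  | succ t ih =>
    have := walk_append ih (d1_loop0 hn)
    have he : t * (n - 1) + (n - 1) = (t + 1) * (n - 1) := by ring
    rwa [he] at this

/-- loop of length `n-1` at vertex `1` in `D2` -/
theorem d2_loop1 (hn : 3 ≤ n) : HasWalk (D2 n) (n - 1) (⟨1, by omega⟩ : Fin n) ⟨1, by omega⟩ := by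
  have h1 : HasWalk (D2 n) 1 (⟨1, by omega⟩ : Fin n) ⟨n - 1, by omega⟩ :=
    walk_single (d2_arc1 hn)
  have h2 : HasWalk (D2 n) (n - 2) (⟨n - 1, by omega⟩ : Fin n) ⟨1, by omega⟩ :=
    d2_walk_cyc (by omega) _ _ _ ⟨0, by simp; omega⟩
  have := walk_append h1 h2
  have he : 1 + (n - 2) = n - 1 := by omega
  rwa [he] at this

theorem d2_loops1 (hn : 3 ≤ n) (t : ℕ) :
    HasWalk (D2 n) (t * (n - 1)) (⟨1, by omega⟩ : Fin n) ⟨1, by omega⟩ := by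
  induction t with
  | zero => rw [Nat.zero_mul]; show (⟨1, by omega⟩ : Fin n) = _; rfl
  | succ t ih =>
    have := walk_append ih (d2_loop1 hn)
    have he : t * (n - 1) + (n - 1) = (t + 1) * (n - 1) := by ring
    rwa [he] at this

/-- general reach lemma for `D1` with `t ≥ 1` shortcuts -/
theorem d1_reach (hn : 3 ≤ n) (a b : Fin n) (t R q k : ℕ) (ht : 1 ≤ t)
    (hR : (b : ℕ) + R = (n - 2) + q * n)
    (hk : k = (a : ℕ) + (t - 1) * (n - 1) + 1 + R) : HasWalk (D1 n) k a b := by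
  have w1 : HasWalk (D1 n) (a : ℕ) a ⟨0, by omega⟩ :=
    d1_walk_cyc (by omega) _ _ _ ⟨0, by simp⟩
  have w2 := d1_loops0 hn (t - 1)
  have w3 : HasWalk (D1 n) 1 (⟨0, by omega⟩ : Fin n) ⟨n - 2, by omega⟩ :=
    walk_single (d1_arc0 hn)
  have w4 : HasWalk (D1 n) R (⟨n - 2, by omega⟩ : Fin n) b :=
    d1_walk_cyc (by omega) _ _ _ ⟨q, by simpa using hR⟩
  have := walk_append (walk_append (walk_append w1 w2) w3) w4
  rwa [hk]

/-- general reach lemma for `D2`, pattern through vertex 1, `t ≥ 1` shortcuts -/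
theorem d2_reach (hn : 3 ≤ n) (a b : Fin n) (t R L1 q1 q k : ℕ) (ht : 1 ≤ t)
    (hL1 : 1 + L1 = (a : ℕ) + q1 * n)
    (hR : (b : ℕ) + R = (n - 1) + q * n)
    (hk : k = L1 + (t - 1) * (n - 1) + 1 + R) : HasWalk (D2 n) k a b := by
  have w1 : HasWalk (D2 n) L1 a ⟨1, by omega⟩ :=
    d2_walk_cyc (by omega) _ _ _ ⟨q1, by simpa using hL1⟩
  have w2 := d2_loops1 hn (t - 1)
  have w3 : HasWalk (D2 n) 1 (⟨1, by omega⟩ : Fin n) ⟨n - 1, by omega⟩ :=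
    walk_single (d2_arc1 hn)
  have w4 : HasWalk (D2 n) R (⟨n - 1, by omega⟩ : Fin n) b :=
    d2_walk_cyc (by omega) _ _ _ ⟨q, by simpa using hR⟩
  have := walk_append (walk_append (walk_append w1 w2) w3) w4
  rwa [hk]

/-- general reach lemma for `D2`, pattern through the `0`-shortcut then vertex 1, `t ≥ 2` -/
theorem d2_reach2 (hn : 3 ≤ n) (b : Fin n) (t R q k : ℕ) (ht : 2 ≤ t)
    (hR : (b : ℕ) + R = (n - 1) + q * n)
    (hk : k = 1 + (n - 3) + (t - 2) * (n - 1) + 1 + R) :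
    HasWalk (D2 n) k (⟨0, by omega⟩ : Fin n) b := by
  have w0 : HasWalk (D2 n) 1 (⟨0, by omega⟩ : Fin n) ⟨n - 2, by omega⟩ :=
    walk_single (d1_le_d2 _ _ (d1_arc0 hn))
  have w1 : HasWalk (D2 n) (n - 3) (⟨n - 2, by omega⟩ : Fin n) ⟨1, by omega⟩ :=
    d2_walk_cyc (by omega) _ _ _ ⟨0, by simp; omega⟩
  have w2 := d2_loops1 hn (t - 2)
  have w3 : HasWalk (D2 n) 1 (⟨1, by omega⟩ : Fin n) ⟨n - 1, by omega⟩ :=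
    walk_single (d2_arc1 hn)
  have w4 : HasWalk (D2 n) R (⟨n - 1, by omega⟩ : Fin n) b :=
    d2_walk_cyc (by omega) _ _ _ ⟨q, by simpa using hR⟩
  have := walk_append (walk_append (walk_append (walk_append w0 w1) w2) w3) w4
  rwa [hk]

end S2
section S2b
variable {n : ℕ}

theorem d1_reach' (hn : 3 ≤ n) (a b : Fin n) (t R q : ℤ) (k : ℕ)
    (ht : 1 ≤ t) (hR0 : 0 ≤ R) (hq0 : 0 ≤ q)
    (hR : (b : ℤ) + R = (n : ℤ) - 2 + q * n)
    (hk : (k : ℤ) = (a : ℤ) + (t - 1) * ((n : ℤ) - 1) + 1 + R) :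
    HasWalk (D1 n) k a b := by
  apply d1_reach hn a b t.toNat R.toNat q.toNat k (by omega)
  · have h2 : 2 ≤ n := by omega
    have : ((b : ℕ) + R.toNat : ℤ) = ((n - 2 : ℕ) + q.toNat * n : ℤ) := by
      push_cast [Int.toNat_of_nonneg hR0, Int.toNat_of_nonneg hq0, h2]
      linarith [hR]
    exact_mod_cast this
  · have h1 : 1 ≤ n := by omega
    have ht1 : (1 : ℕ) ≤ t.toNat := by omega
    have : (k : ℤ) = ((a : ℕ) + (t.toNat - 1) * (n - 1) + 1 + R.toNat : ℤ) := by
      push_cast [Int.toNat_of_nonneg hR0, Int.toNat_of_nonneg (by omega : (0:ℤ) ≤ t), ht1, h1]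
      push_cast [Int.toNat_of_nonneg (by omega : (0:ℤ) ≤ t)] at hk ⊢
      linarith [hk]
    exact_mod_cast this

theorem d2_reach' (hn : 3 ≤ n) (a b : Fin n) (t L1 R q1 q : ℤ) (k : ℕ)
    (ht : 1 ≤ t) (hL0 : 0 ≤ L1) (hR0 : 0 ≤ R) (hq10 : 0 ≤ q1) (hq0 : 0 ≤ q)
    (hL1 : 1 + L1 = (a : ℤ) + q1 * n)
    (hR : (b : ℤ) + R = (n : ℤ) - 1 + q * n)
    (hk : (k : ℤ) = L1 + (t - 1) * ((n : ℤ) - 1) + 1 + R) :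
    HasWalk (D2 n) k a b := by
  apply d2_reach hn a b t.toNat R.toNat L1.toNat q1.toNat q.toNat k (by omega)
  · have : ((1 : ℕ) + L1.toNat : ℤ) = ((a : ℕ) + q1.toNat * n : ℤ) := by
      push_cast [Int.toNat_of_nonneg hL0, Int.toNat_of_nonneg hq10]
      linarith [hL1]
    exact_mod_cast this
  · have h1 : 1 ≤ n := by omega
    have : ((b : ℕ) + R.toNat : ℤ) = ((n - 1 : ℕ) + q.toNat * n : ℤ) := by
      push_cast [Int.toNat_of_nonneg hR0, Int.toNat_of_nonneg hq0, h1]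
      linarith [hR]
    exact_mod_cast this
  · have h1 : 1 ≤ n := by omega
    have ht1 : (1 : ℕ) ≤ t.toNat := by omega
    have : (k : ℤ) = (L1.toNat + (t.toNat - 1) * (n - 1) + 1 + R.toNat : ℤ) := by
      push_cast [Int.toNat_of_nonneg hR0, Int.toNat_of_nonneg hL0,
        Int.toNat_of_nonneg (by omega : (0:ℤ) ≤ t), ht1, h1]
      linarith [hk]
    exact_mod_cast this

theorem d2_reach2' (hn : 3 ≤ n) (b : Fin n) (t R q : ℤ) (k : ℕ)
    (ht : 2 ≤ t) (hR0 : 0 ≤ R) (hq0 : 0 ≤ q)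
    (hR : (b : ℤ) + R = (n : ℤ) - 1 + q * n)
    (hk : (k : ℤ) = 1 + ((n : ℤ) - 3) + (t - 2) * ((n : ℤ) - 1) + 1 + R) :
    HasWalk (D2 n) k (⟨0, by omega⟩ : Fin n) b := by
  apply d2_reach2 hn b t.toNat R.toNat q.toNat k (by omega)
  · have h1 : 1 ≤ n := by omega
    have : ((b : ℕ) + R.toNat : ℤ) = ((n - 1 : ℕ) + q.toNat * n : ℤ) := by
      push_cast [Int.toNat_of_nonneg hR0, Int.toNat_of_nonneg hq0, h1]
      linarith [hR]
    exact_mod_cast this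
  · have h1 : 3 ≤ n := hn
    have ht1 : (2 : ℕ) ≤ t.toNat := by omega
    have : (k : ℤ) = ((1 : ℕ) + (n - 3 : ℕ) + (t.toNat - 2) * (n - 1 : ℕ) + 1 + R.toNat : ℤ) := by
      push_cast [Int.toNat_of_nonneg hR0, Int.toNat_of_nonneg (by omega : (0:ℤ) ≤ t), ht1, h1,
        (by omega : 1 ≤ n)]
      linarith [hk]
    exact_mod_cast this

theorem castk1 (hn : 3 ≤ n) : (((n - 1) ^ 2 + 1 : ℕ) : ℤ) = ((n : ℤ) - 1) ^ 2 + 1 := by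
  have h1 : 1 ≤ n := by omega
  push_cast [h1]
  ring

theorem castk2 (hn : 3 ≤ n) : (((n - 1) ^ 2 : ℕ) : ℤ) = ((n : ℤ) - 1) ^ 2 := by
  have h1 : 1 ≤ n := by omega
  push_cast [h1]
  ring

/-- E1: every pair of vertices of `D1` is joined by a walk of length `(n-1)^2 + 1`. -/
theorem walkD1_all (hn : 3 ≤ n) (a b : Fin n) : HasWalk (D1 n) ((n - 1) ^ 2 + 1) a b := by
  have hA := a.isLt
  have hB := b.isLt
  set A := (a : ℕ) with hAdef
  set B := (b : ℕ) with hBdef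
  have hAz : (a : ℤ) = (A : ℤ) := rfl
  have hBz : (b : ℤ) = (B : ℤ) := rfl
  by_cases h1 : A = 0 ∧ B = n - 1
  · -- d = 1
    apply d1_reach' hn a b ((n : ℤ) - 1) ((n : ℤ) - 1) 1 _ (by omega) (by omega) (by omega)
    · rw [hBz]; have : (B : ℤ) = (n : ℤ) - 1 := by omega
      rw [this]; ring
    · rw [castk1 hn, hAz]
      have : (A : ℤ) = 0 := by omega
      rw [this]; ring
  · by_cases h2 : B + 2 = A + n
    · -- d = 2 : pure cycle, q = n-1
      apply d1_walk_cyc (by omega) _ _ _ ⟨n - 1, ?_⟩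
      have : ((B + ((n-1)^2 + 1) : ℕ) : ℤ) = ((A + (n - 1) * n : ℕ) : ℤ) := by
        push_cast [(by omega : 1 ≤ n), castk1 hn]
        have hc : (B : ℤ) + 2 = (A : ℤ) + n := by exact_mod_cast h2
        linear_combination hc
      exact_mod_cast this
    · by_cases h3 : A = B + 2
      · -- d = n+2 : pure cycle, q = n-2
        apply d1_walk_cyc (by omega) _ _ _ ⟨n - 2, ?_⟩
        have : ((B + ((n-1)^2 + 1) : ℕ) : ℤ) = ((A + (n - 2) * n : ℕ) : ℤ) := by
          push_cast [(by omega : 2 ≤ n), castk1 hn]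
          have hc : (A : ℤ) = (B : ℤ) + 2 := by exact_mod_cast h3
          linear_combination -hc
        exact_mod_cast this
      · by_cases h4 : A ≤ B + 1
        · -- 3 ≤ d ≤ n+1
          have hd3 : B + 3 ≤ A + n := by
            -- d ≥ 3: d=1 is case h1, d=2 is case h2
            rcases Nat.lt_or_ge (A + n) (B + 3) with h | h
            · exfalso
              -- A + n ≤ B + 2; since B ≤ n-1, A ≤ B+2-n ≤ 1
              rcases Nat.lt_or_ge (A + n) (B + 2) with h' | h'
              · -- d ≤ 1: A+n ≤ B+1 ⇒ A = 0 ∧ B = n-1 and d=1 means A+n = B+1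
                exact h1 (by omega)
              · exact h2 (by omega)
            · exact h
          apply d1_reach' hn a b ((A : ℤ) + n - B - 2) ((2 + (B : ℤ) - A) * n - 2 - B)
              (1 + (B : ℤ) - A) _ ?_ ?_ (by omega) ?_ ?_
          · have : (B : ℤ) + 3 ≤ (A : ℤ) + n := by exact_mod_cast hd3
            omega
          · -- R ≥ 0
            rcases Nat.lt_or_ge B A with hAB | hAB
            · -- A = B+1 (A ≤ B+1, A > B); then B ≤ n-2
              have hA1 : A = B + 1 := by omega
              have hBn : B + 2 ≤ n := by omega
              have e1 : (A : ℤ) = (B : ℤ) + 1 := by exact_mod_cast hA1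
              have e2 : (B : ℤ) + 2 ≤ (n : ℤ) := by exact_mod_cast hBn
              nlinarith
            · have e1 : (A : ℤ) ≤ (B : ℤ) := by exact_mod_cast hAB
              have e2 : (B : ℤ) ≤ (n : ℤ) - 1 := by
                have : B ≤ n - 1 := by omega
                omega
              have hn3 : (3 : ℤ) ≤ (n : ℤ) := by exact_mod_cast hn
              nlinarith
          · rw [hBz]; ring
          · rw [castk1 hn, hAz, hBz]; ring
        · -- d ≥ n+3 (A ≥ B+3 since A ≥ B+2 and A ≠ B+2)
          have hd : B + 3 ≤ A := by omega
          apply d1_reach' hn a b ((A : ℤ) - B - 2) ((1 + (B : ℤ) - A + n) * n - 2 - B)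
              ((n : ℤ) - A + B) _ ?_ ?_ ?_ ?_ ?_
          · have : (B : ℤ) + 3 ≤ (A : ℤ) := by exact_mod_cast hd
            omega
          · have e1 : (A : ℤ) ≤ (n : ℤ) - 1 := by
              have : A ≤ n - 1 := by omega
              omega
            have e2 : (B : ℤ) ≤ (n : ℤ) - 1 := by
              have : B ≤ n - 1 := by omega
              omega
            have e0 : (0 : ℤ) ≤ (B : ℤ) := by positivity
            have hn3 : (3 : ℤ) ≤ (n : ℤ) := by exact_mod_cast hn
            nlinarith
          · have e1 : (A : ℤ) ≤ (n : ℤ) - 1 := by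
              have : A ≤ n - 1 := by omega
              omega
            have e0 : (0 : ℤ) ≤ (B : ℤ) := by positivity
            omega
          · rw [hBz]; ring
          · rw [castk1 hn, hAz, hBz]; ring

end S2b
section S2c
variable {n : ℕ}

/-- E3: every pair of vertices of `D2` is joined by a walk of length `(n-1)^2`. -/
theorem walkD2_all (hn : 3 ≤ n) (a b : Fin n) : HasWalk (D2 n) ((n - 1) ^ 2) a b := by
  have hA := a.isLt
  have hB := b.isLt
  set A := (a : ℕ) with hAdef
  set B := (b : ℕ) with hBdef
  have hAz : (a : ℤ) = (A : ℤ) := rfl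
  have hBz : (b : ℤ) = (B : ℤ) := rfl
  have hn3 : (3 : ℤ) ≤ (n : ℤ) := by exact_mod_cast hn
  have hAz' : (A : ℤ) ≤ (n : ℤ) - 1 := by
    have : (A : ℤ) < (n : ℤ) := by exact_mod_cast hA
    omega
  have hBz' : (B : ℤ) ≤ (n : ℤ) - 1 := by
    have : (B : ℤ) < (n : ℤ) := by exact_mod_cast hB
    omega
  have hA0 : (0 : ℤ) ≤ (A : ℤ) := by positivity
  have hB0 : (0 : ℤ) ≤ (B : ℤ) := by positivity
  by_cases h1 : A = 0 ∧ B = n - 1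
  · -- pure cycle, q = n-1
    apply d2_walk_cyc (by omega) _ _ _ ⟨n - 1, ?_⟩
    have : ((B + (n-1)^2 : ℕ) : ℤ) = ((A + (n - 1) * n : ℕ) : ℤ) := by
      push_cast [(by omega : 1 ≤ n), castk2 hn]
      have e1 : (A : ℤ) = 0 := by exact_mod_cast h1.1
      have e2 : (B : ℤ) = (n : ℤ) - 1 := by
        have := h1.2; omega
      linear_combination e2 - e1
    exact_mod_cast this
  · by_cases h2 : A = B + 1
    · -- pure cycle, q = n-2
      apply d2_walk_cyc (by omega) _ _ _ ⟨n - 2, ?_⟩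
      have : ((B + (n-1)^2 : ℕ) : ℤ) = ((A + (n - 2) * n : ℕ) : ℤ) := by
        push_cast [(by omega : 2 ≤ n), castk2 hn]
        have hc : (A : ℤ) = (B : ℤ) + 1 := by exact_mod_cast h2
        linear_combination -hc
      exact_mod_cast this
    · by_cases h3 : 1 ≤ A
      · by_cases h4 : A ≤ B
        · -- e3
          apply d2_reach' hn a b ((A : ℤ) + n - B - 1) ((A : ℤ) - 1)
              ((1 + (B : ℤ) - A) * n - 1 - B) 0 ((B : ℤ) - A) _ ?_ ?_ ?_ (by omega) ?_ ?_ ?_ ?_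
          · have e3 : (1 : ℤ) ≤ (A : ℤ) := by exact_mod_cast h3
            omega
          · have e3 : (1 : ℤ) ≤ (A : ℤ) := by exact_mod_cast h3
            omega
          · have e4 : (A : ℤ) ≤ (B : ℤ) := by exact_mod_cast h4
            nlinarith
          · have e4 : (A : ℤ) ≤ (B : ℤ) := by exact_mod_cast h4
            omega
          · rw [hAz]; ring
          · rw [hBz]; ring
          · rw [castk2 hn, hBz]; ring
        · -- e4 : A ≥ B + 2
          have h5 : B + 2 ≤ A := by omega
          have e5 : (B : ℤ) + 2 ≤ (A : ℤ) := by exact_mod_cast h5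
          apply d2_reach' hn a b ((A : ℤ) - B - 1) ((A : ℤ) - 1)
              (((n : ℤ) - A + B) * n - 1 - B) 0 ((n : ℤ) - 1 - A + B) _ ?_ ?_ ?_ (by omega) ?_ ?_ ?_ ?_
          · omega
          · omega
          · nlinarith
          · omega
          · rw [hAz]; ring
          · rw [hBz]; ring
          · rw [castk2 hn, hBz]; ring
      · -- A = 0
        have hA00 : A = 0 := by omega
        have eA : (A : ℤ) = 0 := by exact_mod_cast hA00
        have haz : a = (⟨0, by omega⟩ : Fin n) := Fin.ext hA00
        by_cases h6 : B = n - 2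
        · -- e5
          have e6z : (B : ℤ) = (n : ℤ) - 2 := by
            have : B + 2 = n := by omega
            have := congrArg (fun x : ℕ => (x : ℤ)) this
            push_cast at this
            omega
          apply d2_reach' hn a b 1 ((n : ℤ) - 1) (((n:ℤ) - 3) * n + n - 1 - B) 1 ((n : ℤ) - 3) _
              ?_ ?_ ?_ ?_ ?_ ?_ ?_ ?_
          · omega
          · omega
          · nlinarith
          · omega
          · omega
          · rw [hAz, eA]; ring
          · rw [hBz]; ring
          · rw [castk2 hn, hBz]; linear_combination e6z
        · -- e6 : A = 0, B ≤ n - 3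
          have h7 : B + 3 ≤ n := by omega
          have e7 : (B : ℤ) + 3 ≤ (n : ℤ) := by exact_mod_cast h7
          rw [haz]
          apply d2_reach2' hn b ((n : ℤ) - 1 - B) ((1 + (B : ℤ)) * n - 1 - B) (B : ℤ) _
              ?_ ?_ ?_ ?_ ?_
          · omega
          · nlinarith
          · omega
          · rw [hBz]; ring
          · rw [castk2 hn, hBz]; ring

end S2c
section S2d
variable {n : ℕ}

def cval (n : ℕ) (b : Fin n) : ℕ := if (b : ℕ) = n - 1 then n - 1 else n - 2 - (b : ℕ)

theorem walkD1_inv (hn : 3 ≤ n) : ∀ (k : ℕ) (a b : Fin n), HasWalk (D1 n) k a b →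
    ∃ t Q, (a : ℕ) + n * Q = (b : ℕ) + k + t ∧
      (t = 0 ∨ (1 ≤ t ∧ (a : ℕ) + (t - 1) * (n - 1) + 1 + cval n b ≤ k)) := by
  intro k
  induction k with
  | zero =>
    intro a b h
    have h' : a = b := h
    exact ⟨0, 0, by simp [h'], Or.inl rfl⟩
  | succ k ih =>
    rintro a b ⟨w, harc, hw⟩
    obtain ⟨t, Q, hres, hb⟩ := ih w b hw
    have hbB := b.isLt
    rcases harc with (h1 | ⟨ha0, hw1⟩) | ⟨ha0, hw2⟩
    · -- normal step, a = w + 1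
      refine ⟨t, Q, ?_, ?_⟩
      · have hP : (a:ℕ) + n * Q = (w:ℕ) + 1 + n * Q := by omega
        omega
      · rcases hb with h | ⟨ht, hbd⟩
        · exact Or.inl h
        · refine Or.inr ⟨ht, ?_⟩
          have e : (a:ℕ) = (w:ℕ) + 1 := h1
          omega
    · -- wrap step: a = 0, w = n-1
      refine ⟨t, Q + 1, ?_, ?_⟩
      · have e : n * (Q + 1) = n * Q + n := by ring
        omega
      · rcases hb with h | ⟨ht, hbd⟩
        · exact Or.inl h
        · exact Or.inr ⟨ht, by omega⟩
    · -- shortcut step: a = 0, w = n-2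
      refine ⟨t + 1, Q + 1, ?_, ?_⟩
      · have e : n * (Q + 1) = n * Q + n := by ring
        omega
      · refine Or.inr ⟨by omega, ?_⟩
        have e0 : t + 1 - 1 = t := by omega
        rw [e0, ha0, Nat.zero_add]
        rcases hb with h | ⟨ht, hbd⟩
        · -- t = 0 : need cval ≤ k
          subst h
          simp only [Nat.zero_mul, Nat.zero_add]
          unfold cval
          by_cases hbv : (b : ℕ) = n - 1
          · rw [if_pos hbv]
            have hQ1 : 1 ≤ Q := by
              rcases Q with _ | Q
              · omega
              · omega
            have hnQ : n * 1 ≤ n * Q := Nat.mul_le_mul_left n hQ1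
            omega
          · rw [if_neg hbv]
            omega
        · have e : t * (n - 1) = (t - 1) * (n - 1) + (n - 1) := by
            obtain ⟨s, rfl⟩ : ∃ s, t = s + 1 := ⟨t - 1, by omega⟩
            have : (s + 1) * (n - 1) = s * (n - 1) + (n - 1) := by ring
            simpa using this
          omega

/-- E2 : there is no walk of length `(n-1)^2` from `v_n` to `v_n` in `D1`. -/
theorem walkD1_not (hn : 3 ≤ n) :
    ¬ HasWalk (D1 n) ((n - 1) ^ 2) (⟨n - 1, by omega⟩ : Fin n) ⟨n - 1, by omega⟩ := by
  intro h
  obtain ⟨t, Q, hres, hb⟩ := walkD1_inv hn _ _ _ h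
  obtain ⟨m, rfl⟩ : ∃ m, n = m + 3 := ⟨n - 3, by omega⟩
  have idk : (m + 3 - 1) ^ 2 = (m + 3) * (m + 3 - 2) + 1 := by
    have e1 : m + 3 - 1 = m + 2 := by omega
    have e2 : m + 3 - 2 = m + 1 := by omega
    rw [e1, e2]; ring
  simp only [idk] at hres hb
  -- hres : (m+2) + (m+3) * Q = (m+2) + ((m+3)*(m+3-2) + 1) + t
  have hdvd : (m + 3) ∣ t + 1 := by
    have h1 : (m + 3) ∣ (m + 3) * Q := dvd_mul_right _ _
    have h2 : (m + 3) ∣ (m + 3) * (m + 3 - 2) := dvd_mul_right _ _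
    have h3 := Nat.dvd_sub h1 h2
    have e : (m + 3) * Q - (m + 3) * (m + 3 - 2) = t + 1 := by omega
    rwa [e] at h3
  obtain ⟨M, hM⟩ := hdvd
  have hM1 : 1 ≤ M := by
    rcases M with _ | M
    · omega
    · omega
  have htn : m + 2 ≤ t := by
    have : (m + 3) * 1 ≤ (m + 3) * M := Nat.mul_le_mul_left _ hM1
    omega
  rcases hb with h0 | ⟨ht, hbd⟩
  · omega
  · -- hbd : (m+2) + (t-1)*(m+3-1) + 1 + cval ≤ (m+3)*(m+3-2) + 1
    have hcv : cval (m + 3) (⟨m + 3 - 1, by omega⟩ : Fin (m + 3)) = m + 2 := by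
      unfold cval
      rw [if_pos rfl]
      omega
    rw [hcv] at hbd
    have e1 : m + 3 - 1 = m + 2 := by omega
    rw [e1] at hbd
    have hmul : (m + 1) * (m + 2) ≤ (t - 1) * (m + 2) := Nat.mul_le_mul_right _ (by omega)
    have idq : (m + 2) + (m + 1) * (m + 2) + 1 + (m + 2) = (m + 3) * (m + 3 - 2) + 1 + (m + 3) := by
      have e2 : m + 3 - 2 = m + 1 := by omega
      rw [e2]; ring
    omega

end S2d
section S3a
variable {n : ℕ}

theorem prim_D1 (hn : 3 ≤ n) : IsPrimitive (D1 n) :=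
  ⟨(n - 1) ^ 2 + 1, by omega, walkD1_all hn⟩

theorem expnt_D1 (hn : 3 ≤ n) : expnt (D1 n) = (n - 1) ^ 2 + 1 := by
  apply expnt_eq_of (prim_D1 hn)
  · have : 2 ≤ (n - 1) ^ 2 := by
      have : 2 ≤ (n - 1) := by omega
      nlinarith
    omega
  · exact ⟨by omega, walkD1_all hn⟩
  · intro hmem
    have he : (n - 1) ^ 2 + 1 - 1 = (n - 1) ^ 2 := by omega
    rw [he] at hmem
    exact walkD1_not hn (hmem.2 _ _)

variable {D : V → V → Prop}

/-- every nontrivial closed walk contains a cycle -/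
theorem closed_walk_cycle : ∀ k, 1 ≤ k → ∀ u : V, HasWalk D k u u →
    ∃ ℓ, 1 ≤ ℓ ∧ ℓ ≤ k ∧ HasCycleOfLength D ℓ := by
  intro k
  induction k using Nat.strong_induction_on with
  | _ k ih =>
    intro hk u h
    obtain ⟨g, hg0, hgk, hga⟩ := walk_iff_fun.mp h
    by_cases hinj : ∀ i < k, ∀ j < k, g i = g j → i = j
    · refine ⟨k, hk, le_refl _, hk, g, hinj, fun i hi => hga i (by omega), ?_⟩
      have := hga (k - 1) (by omega)
      have e : k - 1 + 1 = k := by omega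
      rw [e] at this
      rwa [hgk, ← hg0] at this
    · push_neg at hinj
      obtain ⟨i, hi, j, hj, hgij, hne⟩ := hinj
      -- wlog i < j
      rcases Nat.lt_or_ge i j with hij | hij
      · have hsub : HasWalk D (j - i) (g i) (g i) := by
          rw [walk_iff_fun]
          refine ⟨fun m => g (i + m), by simp, ?_, ?_⟩
          · show g (i + (j - i)) = g i
            have e : i + (j - i) = j := by omega
            rw [e, hgij]
          · intro m hm
            show D (g (i + m)) (g (i + (m + 1)))
            have e : i + (m + 1) = i + m + 1 := by omega
            rw [e]
            exact hga _ (by omega)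
        obtain ⟨ℓ, h1, h2, h3⟩ := ih (j - i) (by omega) (by omega) _ hsub
        exact ⟨ℓ, h1, by omega, h3⟩
      · have hij' : j < i := by omega
        have hsub : HasWalk D (i - j) (g j) (g j) := by
          rw [walk_iff_fun]
          refine ⟨fun m => g (j + m), by simp, ?_, ?_⟩
          · show g (j + (i - j)) = g j
            have e : j + (i - j) = i := by omega
            rw [e, ← hgij]
          · intro m hm
            show D (g (j + m)) (g (j + (m + 1)))
            have e : j + (m + 1) = j + m + 1 := by omega
            rw [e]
            exact hga _ (by omega)
        obtain ⟨ℓ, h1, h2, h3⟩ := ih (i - j) (by omega) (by omega) _ hsub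
        exact ⟨ℓ, h1, by omega, h3⟩

section cyclewalks
variable {s : ℕ} {f : ℕ → V}
  (harc : ∀ i, i + 1 < s → D (f i) (f (i + 1))) (hlast : D (f (s - 1)) (f 0))

include harc in
theorem cycle_walk_fwd : ∀ m, m ≤ s - 1 → HasWalk D m (f 0) (f m) := by
  intro m
  induction m with
  | zero => intro _; rfl
  | succ m ihm =>
    intro hm
    have h1 := ihm (by omega)
    have h2 : HasWalk D 1 (f m) (f (m + 1)) := walk_single (harc m (by omega))
    exact walk_append h1 h2

include harc hlast in
theorem cycle_walk_back (hs : 1 ≤ s) : ∀ t, 1 ≤ t → t ≤ s → HasWalk D t (f (s - t)) (f 0) := by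
  intro t
  induction t with
  | zero => omega
  | succ t ihm =>
    intro _ hts
    rcases Nat.eq_zero_or_pos t with rfl | ht
    · exact walk_single hlast
    · have h1 := ihm ht (by omega)
      have harc' : D (f (s - (t + 1))) (f (s - t)) := by
        have e : s - (t + 1) + 1 = s - t := by omega
        have := harc (s - (t + 1)) (by omega)
        rwa [e] at this
      exact ⟨f (s - t), harc', h1⟩

include harc hlast in
theorem cycle_self_walk (hs : 1 ≤ s) (m : ℕ) (hm : m < s) : HasWalk D s (f m) (f m) := by
  rcases Nat.eq_zero_or_pos m with rfl | hm1
  · have := cycle_walk_back harc hlast hs s hs (le_refl _)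
    simpa using this
  · have h1 := cycle_walk_back harc hlast hs (s - m) (by omega) (by omega)
    have e : s - (s - m) = m := by omega
    rw [e] at h1
    have h2 := cycle_walk_fwd harc m (by omega)
    have := walk_append h1 h2
    have e2 : s - m + m = s := by omega
    rwa [e2] at this

end cyclewalks
end S3a
section S3b
open Classical in
/-- every vertex reaches a vertex of a cycle of length `s` within `card V - s` steps -/
theorem reach_cycle [Fintype V] {D : V → V → Prop} (hD : IsPrimitive D) {s : ℕ} {f : ℕ → V}
    (hs : 1 ≤ s)
    (hinj : ∀ i < s, ∀ j < s, f i = f j → i = j) (u : V) :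
    ∃ (m a : ℕ), m < s ∧ a ≤ Fintype.card V - s ∧ HasWalk D a u (f m) := by
  set T : Set ℕ := {a | ∃ m < s, HasWalk D a u (f m)} with hT
  have hTne : T.Nonempty := by
    obtain ⟨k, hk1, hk⟩ := hD
    exact ⟨k, 0, hs, hk u (f 0)⟩
  have hmem : sInf T ∈ T := Nat.sInf_mem hTne
  obtain ⟨m, hm, hwalk⟩ := hmem
  set a₀ := sInf T with ha₀
  refine ⟨m, a₀, hm, ?_, hwalk⟩
  -- walk function
  obtain ⟨g, hg0, hgk, hga⟩ := walk_iff_fun.mp hwalk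
  -- no internal vertex on the cycle
  have hnotC : ∀ i < a₀, ∀ m' < s, g i ≠ f m' := by
    intro i hi m' hm' heq
    have : HasWalk D i u (g i) := by
      rw [walk_iff_fun]
      exact ⟨g, hg0, rfl, fun j hj => hga j (by omega)⟩
    have : i ∈ T := ⟨m', hm', heq ▸ this⟩
    have := Nat.sInf_le this
    omega
  -- internal vertices distinct
  have hgdist : ∀ i < a₀, ∀ j, i < j → j ≤ a₀ → g i ≠ g j := by
    intro i hi j hij hja heq
    have := walk_cut g hga hij hja heq
    rw [hg0, hgk] at this
    have : a₀ - (j - i) ∈ T := ⟨m, hm, this⟩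
    have := Nat.sInf_le this
    omega
  -- counting
  have hcard : a₀ + s ≤ Fintype.card V := by
    have h1 : ((Finset.range a₀).image g).card = a₀ := by
      rw [Finset.card_image_of_injOn]
      · exact Finset.card_range _
      · intro i hi j hj heq
        simp only [Finset.mem_coe, Finset.mem_range] at hi hj
        by_contra hne
        rcases Nat.lt_or_ge i j with h | h
        · exact hgdist i hi j h (by omega) heq
        · exact hgdist j hj i (by omega) (by omega) heq.symm
    have h2 : ((Finset.range s).image f).card = s := by
      rw [Finset.card_image_of_injOn]
      · exact Finset.card_range _
      · intro i hi j hj heq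
        simp only [Finset.mem_coe, Finset.mem_range] at hi hj
        exact hinj i hi j hj heq
    have hdisj : Disjoint ((Finset.range a₀).image g) ((Finset.range s).image f) := by
      rw [Finset.disjoint_left]
      intro x hx hx2
      simp only [Finset.mem_image, Finset.mem_range] at hx hx2
      obtain ⟨i, hi, rfl⟩ := hx
      obtain ⟨m', hm', heq⟩ := hx2
      exact hnotC i hi m' hm' heq.symm
    have := Finset.card_union_of_disjoint hdisj
    have hle := Finset.card_le_univ (((Finset.range a₀).image g) ∪ ((Finset.range s).image f))
    omega
  omega

open Classical in
/-- if `c` has a closed walk of length `s ≥ 1` then `c` reaches everything at every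
length `≥ (card V - 1) * s`. -/
theorem cycle_full [Fintype V] {D : V → V → Prop} (hD : IsPrimitive D) {s : ℕ} (hs : 1 ≤ s)
    {c : V} (hc : HasWalk D s c c) :
    ∀ m, (Fintype.card V - 1) * s ≤ m → ∀ v, HasWalk D m c v := by
  set n := Fintype.card V with hn
  set R : ℕ → Finset V := fun k => Finset.univ.filter (fun v => HasWalk D k c v) with hR
  have hmemR : ∀ k v, v ∈ R k ↔ HasWalk D k c v := by
    intro k v
    simp [hR]
  have rmono : ∀ k, R k ⊆ R (k + s) := by
    intro k v hv
    rw [hmemR] at hv ⊢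
    have := walk_append hc hv
    rwa [Nat.add_comm] at this
  have hdet : ∀ k k', R k = R k' → R (k + s) = R (k' + s) := by
    intro k k' hkk
    ext v
    rw [hmemR, hmemR]
    constructor
    · intro h
      obtain ⟨w, h1, h2⟩ := walk_split h
      have : w ∈ R k := (hmemR k w).mpr h1
      rw [hkk] at this
      exact walk_append ((hmemR k' w).mp this) h2
    · intro h
      obtain ⟨w, h1, h2⟩ := walk_split h
      have : w ∈ R k' := (hmemR k' w).mpr h1
      rw [← hkk] at this
      exact walk_append ((hmemR k w).mp this) h2
  have hbig : ∀ k, expnt D ≤ k → R k = Finset.univ := by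
    intro k hk
    have hK : k ∈ walkSet D := walkSet_mono hD (expnt_mem hD) hk
    ext v
    simp only [Finset.mem_univ, iff_true]
    exact (hmemR k v).mpr (hK.2 c v)
  have key : ∀ j : ℕ, R (j * s) = Finset.univ ∨ j + 1 ≤ (R (j * s)).card := by
    intro j
    induction j with
    | zero =>
      right
      have : c ∈ R 0 := (hmemR 0 c).mpr rfl
      have := Finset.card_pos.mpr ⟨c, this⟩
      simpa using this
    | succ j ihj =>
      rcases ihj with h | h
      · left
        have h1 : R (j * s) ⊆ R (j * s + s) := rmono _
        have e : (j + 1) * s = j * s + s := by ring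
        rw [e]
        rw [h] at h1
        exact Finset.eq_univ_of_forall (fun v => h1 (Finset.mem_univ v))
      · by_cases hstab : R ((j + 1) * s) = R (j * s)
        · left
          have stab : ∀ i, R ((j + i) * s) = R (j * s) := by
            intro i
            induction i with
            | zero => rfl
            | succ i ihi =>
              have e : (j + (i + 1)) * s = (j + i) * s + s := by ring
              rw [e]
              have := hdet _ _ ihi
              have e2 : (j + 1) * s = j * s + s := by ring
              rw [← e2] at this
              rw [this, hstab]
          have hfull := hbig ((j + expnt D) * s) (by
            have h1 : expnt D * 1 ≤ (j + expnt D) * s :=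
              Nat.mul_le_mul (by omega) hs
            omega)
          rw [stab (expnt D)] at hfull
          rw [stab 1]
          exact hfull
        · right
          have hss : R (j * s) ⊂ R ((j + 1) * s) := by
            refine ⟨?_, fun hsub => hstab (le_antisymm hsub ?_)⟩
            · have e : (j + 1) * s = j * s + s := by ring
              rw [e]
              exact rmono _
            · have e : (j + 1) * s = j * s + s := by ring
              rw [e]
              exact rmono _
          have := Finset.card_lt_card hss
          omega
  have hfull : R ((n - 1) * s) = Finset.univ := by
    rcases key (n - 1) with h | h
    · exact h
    · apply Finset.eq_univ_of_card
      have hle := Finset.card_le_univ (R ((n - 1) * s))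
      have hn1 : 1 ≤ n := by
        rw [hn]
        have : c ∈ (Finset.univ : Finset V) := Finset.mem_univ c
        exact Fintype.card_pos_iff.mpr ⟨c⟩
      omega
  have hsucc : ∀ m, R m = Finset.univ → R (m + 1) = Finset.univ := by
    intro m hm
    apply Finset.eq_univ_of_forall
    intro v
    rw [hmemR]
    obtain ⟨w, hw⟩ := prim_in hD v
    have : w ∈ R m := hm ▸ Finset.mem_univ w
    rw [hmemR] at this
    have := walk_append this (walk_single hw)
    exact this
  have hall : ∀ m, (n - 1) * s ≤ m → R m = Finset.univ := by
    intro m hm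
    obtain ⟨i, rfl⟩ := Nat.exists_eq_add_of_le hm
    clear hm
    induction i with
    | zero => exact hfull
    | succ i ihi => exact hsucc _ ihi
  intro m hm v
  have := hall m hm
  rw [← hmemR]
  rw [this]
  exact Finset.mem_univ v

/-- the Dulmage–Mendelsohn bound -/
theorem dm_bound [Fintype V] {D : V → V → Prop} (hD : IsPrimitive D) {s : ℕ}
    (hC : HasCycleOfLength D s) (hsn : s ≤ Fintype.card V) (h2 : 2 ≤ Fintype.card V) :
    (Fintype.card V + s * (Fintype.card V - 2)) ∈ walkSet D := by
  obtain ⟨hs, f, hinj, harc, hlast⟩ := hC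
  refine ⟨by omega, fun u v => ?_⟩
  obtain ⟨m, a, hm, ha, hwalk⟩ := reach_cycle hD hs hinj u
  have hself : HasWalk D s (f m) (f m) := cycle_self_walk harc hlast hs m hm
  have hfullw := cycle_full hD hs hself
  obtain ⟨n, hn⟩ : ∃ n, Fintype.card V = n := ⟨_, rfl⟩
  rw [hn] at ha hfullw h2 hsn ⊢
  have hrest : HasWalk D (n + s * (n - 2) - a) (f m) v := by
    apply hfullw
    have e : (n - 1) * s = s * (n - 2) + s := by
      obtain ⟨p, rfl⟩ : ∃ p, n = p + 2 := ⟨n - 2, by omega⟩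
      have e1 : p + 2 - 1 = p + 1 := by omega
      have e2 : p + 2 - 2 = p := by omega
      rw [e1, e2]; ring
    omega
  have := walk_append hwalk hrest
  have e : a + (n + s * (n - 2) - a) = n + s * (n - 2) := by omega
  rwa [e] at this

end S3b
section S4a
variable {D : V → V → Prop} {s : ℕ}

/-- cycle reindexed by `ZMod s` -/
def zc (s : ℕ) (f : ℕ → V) : ZMod s → V := fun z => f z.val

variable {f : ℕ → V}

theorem zc_inj [NeZero s] (hinj : ∀ i < s, ∀ j < s, f i = f j → i = j) :
    Function.Injective (zc s f) := by
  intro z z' h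
  have h1 := ZMod.val_lt z
  have h2 := ZMod.val_lt z'
  have := hinj _ h1 _ h2 h
  have e1 := ZMod.natCast_zmod_val z
  have e2 := ZMod.natCast_zmod_val z'
  rw [← e1, ← e2, this]

theorem zc_arc [NeZero s] (harc : ∀ i, i + 1 < s → D (f i) (f (i + 1)))
    (hlast : D (f (s - 1)) (f 0)) (z : ZMod s) : D (zc s f z) (zc s f (z + 1)) := by
  have h1 := ZMod.val_lt z
  have hz : z + 1 = ((z.val + 1 : ℕ) : ZMod s) := by
    push_cast [ZMod.natCast_zmod_val]
    rfl
  by_cases hc : z.val + 1 < s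
  · have hv : (z + 1).val = z.val + 1 := by
      rw [hz, ZMod.val_cast_of_lt hc]
    show D (f z.val) (f (z + 1).val)
    rw [hv]
    exact harc _ hc
  · have hc2 : z.val + 1 = s := by omega
    have hv : (z + 1).val = 0 := by
      rw [hz, hc2, ZMod.natCast_self, ZMod.val_zero]
    show D (f z.val) (f (z + 1).val)
    rw [hv, show z.val = s - 1 by omega]
    exact hlast

theorem zc_walk [NeZero s] (harc : ∀ i, i + 1 < s → D (f i) (f (i + 1)))
    (hlast : D (f (s - 1)) (f 0)) (z : ZMod s) :
    ∀ d : ℕ, HasWalk D d (zc s f z) (zc s f (z + d)) := by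
  intro d
  induction d with
  | zero =>
    show zc s f z = zc s f (z + ((0 : ℕ) : ZMod s))
    norm_num
  | succ d ih =>
    have h2 := zc_arc harc hlast (z + (d : ℕ))
    have := walk_append ih (walk_single h2)
    have e : z + ((d : ℕ) : ZMod s) + 1 = z + ((d + 1 : ℕ) : ZMod s) := by push_cast; ring
    rwa [e] at this

theorem zc_chord [NeZero s] (hG : ∀ ℓ, HasCycleOfLength D ℓ → s ≤ ℓ)
    (hinj : ∀ i < s, ∀ j < s, f i = f j → i = j)
    (harc : ∀ i, i + 1 < s → D (f i) (f (i + 1)))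
    (hlast : D (f (s - 1)) (f 0)) {z z' : ZMod s}
    (h : D (zc s f z) (zc s f z')) : z' = z + 1 := by
  have hs1 : 1 ≤ s := Nat.pos_of_ne_zero (NeZero.ne s)
  set d := (z - z').val with hd
  have hdlt : d < s := ZMod.val_lt _
  have hcyc : HasCycleOfLength D (d + 1) := by
    refine ⟨by omega, fun m => zc s f (z' + m), ?_, ?_, ?_⟩
    · intro i hi j hj heq
      have := zc_inj hinj heq
      have h2 : ((i : ℕ) : ZMod s) = ((j : ℕ) : ZMod s) := by
        have := add_left_cancel this
        exact this
      rw [ZMod.natCast_eq_natCast_iff'] at h2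
      rw [Nat.mod_eq_of_lt (by omega), Nat.mod_eq_of_lt (by omega)] at h2
      exact h2
    · intro i hi
      have := zc_arc harc hlast (z' + (i : ℕ))
      have e : z' + ((i : ℕ) : ZMod s) + 1 = z' + ((i + 1 : ℕ) : ZMod s) := by push_cast; ring
      rwa [e] at this
    · show D (zc s f (z' + ((d + 1 - 1 : ℕ) : ZMod s))) (zc s f (z' + ((0 : ℕ) : ZMod s)))
      have e : z' + ((d + 1 - 1 : ℕ) : ZMod s) = z := by
        simp only [Nat.add_sub_cancel]
        rw [hd, ZMod.natCast_zmod_val]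
        ring
      have e0 : z' + ((0 : ℕ) : ZMod s) = z' := by push_cast; ring
      rw [e, e0]
      exact h
  have := hG _ hcyc
  have hds : d = s - 1 := by omega
  have : z - z' = ((s - 1 : ℕ) : ZMod s) := by
    rw [← hds, hd, ZMod.natCast_zmod_val]
  have hcast : ((s - 1 : ℕ) : ZMod s) = -1 := by
    have : ((s - 1 : ℕ) : ZMod s) + 1 = 0 := by
      rw [show ((1 : ZMod s)) = ((1 : ℕ) : ZMod s) by push_cast; rfl]
      rw [← Nat.cast_add]
      rw [show s - 1 + 1 = s by omega]
      exact ZMod.natCast_self s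
    linear_combination this
  rw [hcast] at this
  linear_combination -this

end S4a
section S4b
variable {n : ℕ}

theorem castm1 (h3 : 3 ≤ n) : ((n - 2 : ℕ) : ZMod (n - 1)) = -1 := by
  have h : ((n - 2 : ℕ) : ZMod (n - 1)) + 1 = 0 := by
    rw [show (1 : ZMod (n - 1)) = ((1 : ℕ) : ZMod (n - 1)) by push_cast; rfl, ← Nat.cast_add,
      show n - 2 + 1 = n - 1 by omega]
    exact ZMod.natCast_self _
  linear_combination h

theorem castm2 (h3 : 3 ≤ n) : ((n - 3 : ℕ) : ZMod (n - 1)) = -2 := by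
  have h : ((n - 3 : ℕ) : ZMod (n - 1)) + 2 = 0 := by
    rw [show (2 : ZMod (n - 1)) = ((2 : ℕ) : ZMod (n - 1)) by push_cast; rfl, ← Nat.cast_add,
      show n - 3 + 2 = n - 1 by omega]
    exact ZMod.natCast_self _
  linear_combination h

/-- if `D` contains a `(n-1)`-cycle `c`, a vertex `x`, and the `D2` pattern of arcs,
then all pairs are joined by walks of length `(n-1)^2`. -/
theorem d2_embed [Fintype V] {D : V → V → Prop} (hn : Fintype.card V = n) (h3 : 3 ≤ n)
    [NeZero (n - 1)] (c : ZMod (n - 1) → V) (x : V)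
    (hcov : ∀ v, v = x ∨ ∃ z, v = c z)
    (hcyc : ∀ z, D (c z) (c (z + 1)))
    (i : ZMod (n - 1))
    (hin1 : D (c (i - 1)) x) (hin2 : D (c (i - 2)) x) (hout : D x (c i)) :
    ∀ u v, HasWalk D ((n - 1) ^ 2) u v := by
  set F : Fin n → V :=
    fun a => if (a : ℕ) = n - 1 then x else c (i + ((n - 2 - (a : ℕ) : ℕ) : ZMod (n - 1)))
    with hFdef
  have hF : ∀ a b, D2 n a b → D (F a) (F b) := by
    intro a b hab
    have ha := a.isLt
    have hb := b.isLt
    rcases hab with ((h1 | ⟨h2a, h2b⟩) | ⟨h3a, h3b⟩) | ⟨h4a, h4b⟩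
    · by_cases hae : (a : ℕ) = n - 1
      · have hbe : (b : ℕ) = n - 2 := by omega
        simp only [hFdef, hae, hbe, if_pos rfl, if_neg (show ¬ (n - 2 = n - 1) by omega)]
        have e : ((n - 2 - (n - 2) : ℕ) : ZMod (n - 1)) = 0 := by
          rw [Nat.sub_self, Nat.cast_zero]
        rw [e, add_zero]
        exact hout
      · have hbe : ¬ ((b : ℕ) = n - 1) := by omega
        simp only [hFdef, if_neg hae, if_neg hbe]
        have he : n - 2 - (b : ℕ) = (n - 2 - (a : ℕ)) + 1 := by omega
        have e : i + ((n - 2 - (b : ℕ) : ℕ) : ZMod (n - 1))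
            = (i + ((n - 2 - (a : ℕ) : ℕ) : ZMod (n - 1))) + 1 := by
          rw [he]; push_cast; ring
        rw [e]
        exact hcyc _
    · simp only [hFdef, h2a, h2b, if_pos rfl, if_neg (show ¬ ((0 : ℕ) = n - 1) by omega)]
      rw [show n - 2 - 0 = n - 2 by omega, castm1 h3]
      have e : i + (-1 : ZMod (n - 1)) = i - 1 := by ring
      rw [e]
      exact hin1
    · simp only [hFdef, h3a, h3b, if_neg (show ¬ ((0 : ℕ) = n - 1) by omega),
        if_neg (show ¬ (n - 2 = n - 1) by omega)]
      rw [show n - 2 - 0 = n - 2 by omega, castm1 h3]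
      have e1 : i + (-1 : ZMod (n - 1)) = i - 1 := by ring
      have e2 : ((n - 2 - (n - 2) : ℕ) : ZMod (n - 1)) = 0 := by rw [Nat.sub_self, Nat.cast_zero]
      rw [e1, e2, add_zero]
      have := hcyc (i - 1)
      have e3 : i - 1 + 1 = i := by ring
      rwa [e3] at this
    · simp only [hFdef, h4a, h4b, if_pos rfl, if_neg (show ¬ ((1 : ℕ) = n - 1) by omega)]
      rw [show n - 2 - 1 = n - 3 by omega, castm2 h3]
      have e : i + (-2 : ZMod (n - 1)) = i - 2 := by ring
      rw [e]
      exact hin2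
  have hsurj : Function.Surjective F := by
    intro v
    rcases hcov v with rfl | ⟨z, rfl⟩
    · refine ⟨⟨n - 1, by omega⟩, ?_⟩
      simp [hFdef]
    · set t := (z - i).val with htdef
      have htlt : t < n - 1 := ZMod.val_lt _
      refine ⟨⟨n - 2 - t, by omega⟩, ?_⟩
      show F _ = c z
      simp only [hFdef]
      rw [if_neg (show ¬ ((n - 2 - t : ℕ) = n - 1) by omega)]
      congr 1
      rw [show n - 2 - (n - 2 - t) = t by omega, htdef, ZMod.natCast_zmod_val]
      ring
  intro u v
  obtain ⟨a, ha⟩ := hsurj u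
  obtain ⟨b, hb⟩ := hsurj v
  have := walk_map F hF (walkD2_all h3 a b)
  rwa [ha, hb] at this

/-- cycles through `x` constrain the attachment arcs -/
theorem x_pair {D : V → V → Prop} (h3 : 3 ≤ n) [NeZero (n - 1)]
    {f : ℕ → V} (hG : ∀ ℓ, HasCycleOfLength D ℓ → (n - 1) ≤ ℓ)
    (hinj : ∀ i < n - 1, ∀ j < n - 1, f i = f j → i = j)
    (harc : ∀ i, i + 1 < n - 1 → D (f i) (f (i + 1)))
    (hlast : D (f (n - 1 - 1)) (f 0)) {x : V}
    (hx : ∀ z : ZMod (n - 1), zc (n - 1) f z ≠ x)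
    {z z' : ZMod (n - 1)} (hin : D (zc (n - 1) f z') x) (hout : D x (zc (n - 1) f z)) :
    z' - z = -1 ∨ z' - z = -2 := by
  set c := zc (n - 1) f with hcdef
  set d := (z' - z).val with hddef
  have hdlt : d < n - 1 := ZMod.val_lt _
  have hcyc : HasCycleOfLength D (2 + d) := by
    refine ⟨by omega, fun m => if m = 0 then x else c (z + ((m - 1 : ℕ) : ZMod (n - 1))),
      ?_, ?_, ?_⟩
    · intro i hi j hj heq
      have heq' : (if i = 0 then x else c (z + ((i - 1 : ℕ) : ZMod (n - 1))))
          = (if j = 0 then x else c (z + ((j - 1 : ℕ) : ZMod (n - 1)))) := heq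
      rcases Nat.eq_zero_or_pos i with rfl | hi1
      · rcases Nat.eq_zero_or_pos j with rfl | hj1
        · rfl
        · rw [if_pos rfl, if_neg (by omega)] at heq'
          exact absurd heq'.symm (hx _)
      · rcases Nat.eq_zero_or_pos j with rfl | hj1
        · rw [if_pos rfl, if_neg (by omega)] at heq'
          exact absurd heq' (hx _)
        · rw [if_neg (by omega), if_neg (by omega)] at heq'
          have := zc_inj hinj heq'
          have h2 := add_left_cancel this
          rw [ZMod.natCast_eq_natCast_iff'] at h2
          rw [Nat.mod_eq_of_lt (by omega), Nat.mod_eq_of_lt (by omega)] at h2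
          omega
    · intro m hm
      show D (if m = 0 then x else c (z + ((m - 1 : ℕ) : ZMod (n - 1))))
        (if m + 1 = 0 then x else c (z + ((m + 1 - 1 : ℕ) : ZMod (n - 1))))
      rcases Nat.eq_zero_or_pos m with rfl | hm1
      · rw [if_pos rfl, if_neg (by omega)]
        have e : z + ((0 + 1 - 1 : ℕ) : ZMod (n - 1)) = z := by norm_num
        rw [e]
        exact hout
      · rw [if_neg (by omega), if_neg (by omega)]
        have := zc_arc harc hlast (z + ((m - 1 : ℕ) : ZMod (n - 1)))
        have e : z + ((m - 1 : ℕ) : ZMod (n - 1)) + 1 = z + ((m + 1 - 1 : ℕ) : ZMod (n - 1)) := by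
          rw [show m + 1 - 1 = (m - 1) + 1 by omega]
          push_cast
          ring
        rwa [e] at this
    · show D (if 2 + d - 1 = 0 then x else c (z + ((2 + d - 1 - 1 : ℕ) : ZMod (n - 1))))
        (if (0 : ℕ) = 0 then x else c (z + ((0 - 1 : ℕ) : ZMod (n - 1))))
      rw [if_neg (by omega), if_pos rfl]
      have e : z + ((2 + d - 1 - 1 : ℕ) : ZMod (n - 1)) = z' := by
        rw [show 2 + d - 1 - 1 = d by omega, hddef, ZMod.natCast_zmod_val]
        ring
      rw [e]
      exact hin
  have hge := hG _ hcyc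
  have : d = n - 3 ∨ d = n - 2 := by omega
  rcases this with h | h
  · right
    have : z' - z = ((n - 3 : ℕ) : ZMod (n - 1)) := by
      rw [← h, hddef, ZMod.natCast_zmod_val]
    rw [castm2 h3] at this
    exact this
  · left
    have : z' - z = ((n - 2 : ℕ) : ZMod (n - 1)) := by
      rw [← h, hddef, ZMod.natCast_zmod_val]
    rw [castm1 h3] at this
    exact this

end S4b
section S4c
variable {n : ℕ}

theorem d1_iso [Fintype V] {D : V → V → Prop} (hn : Fintype.card V = n) (h3 : 3 ≤ n)
    [NeZero (n - 1)] (c : ZMod (n - 1) → V) (x : V)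
    (hcinj : Function.Injective c)
    (hx : ∀ z, c z ≠ x)
    (hcov : ∀ v, v = x ∨ ∃ z, v = c z)
    (i₀ : ZMod (n - 1))
    (hchar : ∀ u v, D u v ↔
      ((∃ z, u = c z ∧ v = c (z + 1)) ∨ (u = c (i₀ - 1) ∧ v = x) ∨ (u = x ∧ v = c i₀))) :
    DigraphIso D (D1 n) := by
  set F : Fin n → V :=
    fun a => if (a : ℕ) = n - 1 then x else c (i₀ + ((n - 2 - (a : ℕ) : ℕ) : ZMod (n - 1)))
    with hFdef
  have hFx : ∀ a : Fin n, (a : ℕ) = n - 1 → F a = x := by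
    intro a ha; simp only [hFdef, if_pos ha]
  have hFc : ∀ a : Fin n, (a : ℕ) ≠ n - 1 →
      F a = c (i₀ + ((n - 2 - (a : ℕ) : ℕ) : ZMod (n - 1))) := by
    intro a ha; simp only [hFdef, if_neg ha]
  have hsurj : Function.Surjective F := by
    intro v
    rcases hcov v with rfl | ⟨z, rfl⟩
    · exact ⟨⟨n - 1, by omega⟩, hFx _ rfl⟩
    · set t := (z - i₀).val with htdef
      have htlt : t < n - 1 := ZMod.val_lt _
      refine ⟨⟨n - 2 - t, by omega⟩, ?_⟩
      rw [hFc _ (by simp; omega)]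
      congr 1
      show i₀ + ((n - 2 - (n - 2 - t) : ℕ) : ZMod (n - 1)) = z
      rw [show n - 2 - (n - 2 - t) = t by omega, htdef, ZMod.natCast_zmod_val]
      ring
  have hbij : Function.Bijective F :=
    (Fintype.bijective_iff_surjective_and_card F).mpr ⟨hsurj, by simp [hn]⟩
  have key : ∀ a b : Fin n, D (F a) (F b) ↔ D1 n a b := by
    intro a b
    have ha := a.isLt
    have hb := b.isLt
    by_cases hae : (a : ℕ) = n - 1
    · rw [hFx a hae]
      by_cases hbe : (b : ℕ) = n - 1
      · rw [hFx b hbe]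
        constructor
        · intro hD
          exfalso
          rcases (hchar _ _).mp hD with ⟨z, h1, _⟩ | ⟨h1, _⟩ | ⟨_, h2⟩
          · exact hx z h1.symm
          · exact hx _ h1.symm
          · exact hx _ h2.symm
        · rintro ((h | ⟨h1, h2⟩) | ⟨h1, h2⟩) <;> omega
      · rw [hFc b hbe]
        have hlhs : D x (c (i₀ + ((n - 2 - (b : ℕ) : ℕ) : ZMod (n - 1)))) ↔ (b : ℕ) = n - 2 := by
          constructor
          · intro hD
            rcases (hchar _ _).mp hD with ⟨z, h1, _⟩ | ⟨h1, _⟩ | ⟨_, h2⟩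
            · exact absurd h1.symm (hx z)
            · exact absurd h1.symm (hx _)
            · have h7 : i₀ + ((n - 2 - (b : ℕ) : ℕ) : ZMod (n - 1)) = i₀ + 0 := by
                rw [add_zero]; exact hcinj h2
              have h0 := add_left_cancel h7
              rw [ZMod.natCast_eq_zero_iff] at h0
              rcases Nat.eq_zero_or_pos (n - 2 - (b : ℕ)) with h | h
              · omega
              · have := Nat.le_of_dvd h h0
                omega
          · intro hbv
            apply (hchar _ _).mpr
            right; right
            refine ⟨rfl, ?_⟩
            congr 1
            rw [show n - 2 - (b : ℕ) = 0 by omega, Nat.cast_zero, add_zero]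
        rw [hlhs]
        show _ ↔ D1 n a b
        unfold D1 stdCycleRev
        constructor
        · intro h; left; left; omega
        · rintro ((h | ⟨h1, h2⟩) | ⟨h1, h2⟩) <;> omega
    · rw [hFc a hae]
      by_cases hbe : (b : ℕ) = n - 1
      · rw [hFx b hbe]
        have hlhs : D (c (i₀ + ((n - 2 - (a : ℕ) : ℕ) : ZMod (n - 1)))) x ↔ (a : ℕ) = 0 := by
          constructor
          · intro hD
            rcases (hchar _ _).mp hD with ⟨z, _, h2⟩ | ⟨h1, _⟩ | ⟨h1, _⟩
            · exact absurd h2.symm (hx _)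
            · have := hcinj h1
              have h0 : ((n - 2 - (a : ℕ) : ℕ) : ZMod (n - 1)) = -1 := by
                have h2 := this
                have : ((n - 2 - (a : ℕ) : ℕ) : ZMod (n - 1)) = -1 := by
                  have := congrArg (fun w => w - i₀) h2
                  rw [add_comm, add_sub_cancel_right] at this
                  rw [this]; ring
                exact this
              rw [← castm1 h3, ZMod.natCast_eq_natCast_iff'] at h0
              rw [Nat.mod_eq_of_lt (by omega), Nat.mod_eq_of_lt (by omega)] at h0
              omega
            · exact absurd h1 (hx _)
          · intro hav
            apply (hchar _ _).mpr
            right; left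
            refine ⟨?_, rfl⟩
            congr 1
            rw [show n - 2 - (a : ℕ) = n - 2 by omega, castm1 h3]
            ring
        rw [hlhs]
        unfold D1 stdCycleRev
        constructor
        · intro h; left; right; exact ⟨h, hbe⟩
        · rintro ((h | ⟨h1, h2⟩) | ⟨h1, h2⟩) <;> omega
      · rw [hFc b hbe]
        have hlhs : D (c (i₀ + ((n - 2 - (a : ℕ) : ℕ) : ZMod (n - 1))))
            (c (i₀ + ((n - 2 - (b : ℕ) : ℕ) : ZMod (n - 1)))) ↔
            (n - 2 - (b : ℕ)) % (n - 1) = (n - 1 - (a : ℕ)) % (n - 1) := by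
          constructor
          · intro hD
            rcases (hchar _ _).mp hD with ⟨z, h1, h2⟩ | ⟨_, h2⟩ | ⟨h1, _⟩
            · have hz := hcinj h1
              rw [← hz] at h2
              have h4 := hcinj h2
              have h5 : ((n - 2 - (b : ℕ) : ℕ) : ZMod (n - 1))
                  = ((n - 2 - (a : ℕ) : ℕ) : ZMod (n - 1)) + 1 := by
                have := congrArg (fun w => w - i₀) h4
                rw [add_comm i₀, add_sub_cancel_right] at this
                rw [this]; ring
              have h6 : ((n - 2 - (a : ℕ) : ℕ) : ZMod (n - 1)) + 1
                  = ((n - 1 - (a : ℕ) : ℕ) : ZMod (n - 1)) := by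
                rw [show n - 1 - (a : ℕ) = (n - 2 - (a : ℕ)) + 1 by omega]
                push_cast; ring
              rw [h6] at h5
              rwa [ZMod.natCast_eq_natCast_iff'] at h5
            · exact absurd h2 (hx _)
            · exact absurd h1 (hx _)
          · intro hmod
            apply (hchar _ _).mpr
            left
            refine ⟨_, rfl, ?_⟩
            congr 1
            have h6 : ((n - 2 - (a : ℕ) : ℕ) : ZMod (n - 1)) + 1
                = ((n - 1 - (a : ℕ) : ℕ) : ZMod (n - 1)) := by
              rw [show n - 1 - (a : ℕ) = (n - 2 - (a : ℕ)) + 1 by omega]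
              push_cast; ring
            rw [add_assoc, h6]
            congr 1
            rw [ZMod.natCast_eq_natCast_iff']
            exact hmod
        rw [hlhs]
        unfold D1 stdCycleRev
        rcases Nat.eq_zero_or_pos (a : ℕ) with haz | haz
        · rw [show n - 1 - (a : ℕ) = n - 1 by omega, Nat.mod_self,
            Nat.mod_eq_of_lt (show n - 2 - (b : ℕ) < n - 1 by omega)]
          constructor
          · intro h; right; exact ⟨haz, by omega⟩
          · rintro ((h | ⟨h1, h2⟩) | ⟨h1, h2⟩) <;> omega
        · rw [Nat.mod_eq_of_lt (show n - 2 - (b : ℕ) < n - 1 by omega),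
            Nat.mod_eq_of_lt (show n - 1 - (a : ℕ) < n - 1 by omega)]
          constructor
          · intro h; left; left; omega
          · rintro ((h | ⟨h1, h2⟩) | ⟨h1, h2⟩) <;> omega
  refine ⟨(Equiv.ofBijective F hbij).symm, fun u v => ?_⟩
  have hu : F ((Equiv.ofBijective F hbij).symm u) = u := by
    show (Equiv.ofBijective F hbij) ((Equiv.ofBijective F hbij).symm u) = u
    exact Equiv.apply_symm_apply _ _
  have hv : F ((Equiv.ofBijective F hbij).symm v) = v := by
    show (Equiv.ofBijective F hbij) ((Equiv.ofBijective F hbij).symm v) = v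
    exact Equiv.apply_symm_apply _ _
  rw [← key ((Equiv.ofBijective F hbij).symm u) ((Equiv.ofBijective F hbij).symm v), hu, hv]

end S4c
section S4d

theorem hard_dir [Fintype V] {D : V → V → Prop} {n : ℕ} (hn : Fintype.card V = n) (h3 : 3 ≤ n)
    (hD : IsPrimitive D) (hexp : expnt D = (n - 1) ^ 2 + 1) : DigraphIso D (D1 n) := by
  classical
  haveI : NeZero (n - 1) := ⟨by omega⟩
  have hne : Nonempty V := by
    rw [← Fintype.card_pos_iff]; omega
  obtain ⟨u0⟩ := hne
  have hwexp := expnt_mem hD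
  obtain ⟨ℓ0, hl1, hl2, hl3⟩ := closed_walk_cycle (expnt D) hwexp.1 u0 (hwexp.2 u0 u0)
  have hCne : Set.Nonempty {ℓ | HasCycleOfLength D ℓ} := ⟨ℓ0, hl3⟩
  obtain ⟨s, hsmem, hsle⟩ : ∃ s, HasCycleOfLength D s ∧ ∀ ℓ, HasCycleOfLength D ℓ → s ≤ ℓ :=
    ⟨sInf {ℓ | HasCycleOfLength D ℓ}, Nat.sInf_mem hCne, fun ℓ h => Nat.sInf_le h⟩
  have hmin : ∀ k, k ∈ walkSet D → (n - 1) ^ 2 + 1 ≤ k := by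
    intro k hk
    have := Nat.sInf_le hk
    rwa [← expnt_def, hexp] at this
  obtain ⟨hs0, f, hinj, harc, hlast⟩ := hsmem
  have hsn : s ≤ n := by
    have h1 : ((Finset.range s).image f).card = s := by
      rw [Finset.card_image_of_injOn]
      · exact Finset.card_range _
      · intro i hi j hj heq
        simp only [Finset.mem_coe, Finset.mem_range] at hi hj
        exact hinj i hi j hj heq
    have h2 := Finset.card_le_univ ((Finset.range s).image f)
    omega
  -- rule out s ≤ n - 2
  have hs_ge : n - 1 ≤ s := by
    by_contra hcon
    push_neg at hcon
    have hdm := dm_bound hD ⟨hs0, f, hinj, harc, hlast⟩ (by omega) (by omega)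
    rw [hn] at hdm
    have hle := hmin _ hdm
    have hA : s * (n - 2) ≤ (n - 2) * (n - 2) := Nat.mul_le_mul_right _ (by omega)
    have hB : (n - 1) * (n - 2) = (n - 2) * (n - 2) + (n - 2) := by
      obtain ⟨m, rfl⟩ : ∃ m, n = m + 3 := ⟨n - 3, by omega⟩
      rw [show m + 3 - 1 = m + 2 by omega, show m + 3 - 2 = m + 1 by omega]
      ring
    have hC : (n - 1) ^ 2 + 1 = n + (n - 1) * (n - 2) := by
      obtain ⟨m, rfl⟩ : ∃ m, n = m + 3 := ⟨n - 3, by omega⟩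
      rw [show m + 3 - 1 = m + 2 by omega, show m + 3 - 2 = m + 1 by omega]
      ring
    rw [hC] at hle
    omega
  -- rule out s = n
  have hs_ne : s ≠ n := by
    intro hseq
    subst hseq
    haveI : NeZero s := ⟨by omega⟩
    set c := zc s f with hcdef
    have hcinj : Function.Injective c := zc_inj hinj
    have hcov : ∀ v : V, ∃ z, v = c z := by
      have hsurj : Function.Surjective c := by
        have := Fintype.bijective_iff_injective_and_card c
        rw [ZMod.card, hn] at this
        exact ((this.mpr ⟨hcinj, rfl⟩).surjective)
      intro v
      obtain ⟨z, hz⟩ := hsurj v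
      exact ⟨z, hz.symm⟩
    have hdet : ∀ k (z : ZMod s) (v : V), HasWalk D k (c z) v → v = c (z + (k : ℕ)) := by
      intro k
      induction k with
      | zero =>
        intro z v h
        have h' : c z = v := h
        rw [← h', Nat.cast_zero, add_zero]
      | succ k ih =>
        rintro z v ⟨w, hw, hwalk⟩
        obtain ⟨zw, rfl⟩ := hcov w
        have := zc_chord hsle hinj harc hlast hw
        subst this
        have := ih _ _ hwalk
        rw [this]
        congr 1
        push_cast
        ring
    have h1 := hdet (expnt D) 0 (c 0) (hwexp.2 _ _)
    have h2 := hdet (expnt D) 0 (c 1) (hwexp.2 _ _)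
    have h12 : c (0 : ZMod s) = c 1 := h1.trans h2.symm
    have h01 : (1 : ZMod s) = 0 := by linear_combination -(hcinj h12)
    have hdvd : s ∣ 1 := by
      rw [show (1 : ZMod s) = ((1 : ℕ) : ZMod s) by push_cast; rfl] at h01
      exact (ZMod.natCast_eq_zero_iff 1 s).mp h01
    have := Nat.le_of_dvd one_pos hdvd
    omega
  have hs_eq : s = n - 1 := by omega
  subst hs_eq
  -- main structure: cycle of length n-1 plus one extra vertex x
  set c := zc (n - 1) f with hcdef
  have hcinj : Function.Injective c := zc_inj hinj
  have hcyc : ∀ z, D (c z) (c (z + 1)) := zc_arc harc hlast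
  have hchord : ∀ {z z' : ZMod (n - 1)}, D (c z) (c z') → z' = z + 1 :=
    fun h => zc_chord hsle hinj harc hlast h
  obtain ⟨x, hx⟩ : ∃ x : V, ∀ z, c z ≠ x := by
    have : ¬ Function.Surjective c := by
      intro hsurjc
      have := Fintype.card_le_of_surjective c hsurjc
      rw [ZMod.card, hn] at this
      omega
    by_contra hcon
    push_neg at hcon
    exact this fun x => by
      obtain ⟨z, hz⟩ := hcon x
      exact ⟨z, hz⟩
  have hcov : ∀ v : V, v = x ∨ ∃ z, v = c z := by
    have hS : (Finset.univ.image c).card = n - 1 := by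
      rw [Finset.card_image_of_injective _ hcinj, Finset.card_univ, ZMod.card]
    have hxS : x ∉ Finset.univ.image c := by
      intro hmem
      obtain ⟨z, _, hz⟩ := Finset.mem_image.mp hmem
      exact hx z hz
    have hT : (insert x (Finset.univ.image c)).card = n := by
      rw [Finset.card_insert_of_notMem hxS, hS]
      omega
    have hTu : insert x (Finset.univ.image c) = Finset.univ := by
      apply Finset.eq_univ_of_card
      rw [hT]
      exact hn.symm
    intro v
    have hv : v ∈ insert x (Finset.univ.image c) := hTu ▸ Finset.mem_univ v
    rcases Finset.mem_insert.mp hv with h | h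
    · exact Or.inl h
    · obtain ⟨z, _, hz⟩ := Finset.mem_image.mp h
      exact Or.inr ⟨z, hz.symm⟩
  have hxloop : ¬ D x x := by
    intro h
    have hc1 : HasCycleOfLength D 1 :=
      ⟨one_pos, fun _ => x, fun i hi j hj _ => by omega, fun i hi => by omega, h⟩
    have := hsle 1 hc1
    omega
  obtain ⟨i₀, hout⟩ : ∃ i₀, D x (c i₀) := by
    obtain ⟨w, hw⟩ := prim_out hD x
    rcases hcov w with rfl | ⟨z, rfl⟩
    · exact absurd hw hxloop
    · exact ⟨z, hw⟩
  obtain ⟨j₀, hin⟩ : ∃ j₀, D (c j₀) x := by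
    obtain ⟨w, hw⟩ := prim_in hD x
    rcases hcov w with rfl | ⟨z, rfl⟩
    · exact absurd hw hxloop
    · exact ⟨z, hw⟩
  have hpairs : ∀ {z z' : ZMod (n - 1)}, D (c z') x → D x (c z) →
      z' - z = -1 ∨ z' - z = -2 :=
    fun hi ho => x_pair h3 hsle hinj harc hlast hx hi ho
  have hfalse_of_d2 : (∀ u v : V, HasWalk D ((n - 1) ^ 2) u v) → False := by
    intro hall
    have hmem : (n - 1) ^ 2 ∈ walkSet D := ⟨Nat.one_le_pow _ _ (by omega), hall⟩
    have := hmin _ hmem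
    omega
  by_cases hQ : ∀ z z', D (c z) x → D (c z') x → z = z'
  · by_cases hP : ∀ z z', D x (c z) → D x (c z') → z = z'
    · -- both singletons
      rcases hpairs hin hout with hcase | hcase
      · -- j₀ = i₀ - 1 : D ≅ D1
        have hj : j₀ = i₀ - 1 := by linear_combination hcase
        have hchar : ∀ u v, D u v ↔
            ((∃ z, u = c z ∧ v = c (z + 1)) ∨ (u = c (i₀ - 1) ∧ v = x) ∨ (u = x ∧ v = c i₀)) := by
          intro u v
          constructor
          · intro hD'
            rcases hcov u with rfl | ⟨z, rfl⟩
            · rcases hcov v with rfl | ⟨z', rfl⟩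
              · exact absurd hD' hxloop
              · have := hP z' i₀ hD' hout
                subst this
                exact Or.inr (Or.inr ⟨rfl, rfl⟩)
            · rcases hcov v with rfl | ⟨z', rfl⟩
              · have := hQ z j₀ hD' hin
                subst this
                exact Or.inr (Or.inl ⟨by rw [hj], rfl⟩)
              · have := hchord hD'
                subst this
                exact Or.inl ⟨z, rfl, rfl⟩
          · rintro (⟨z, rfl, rfl⟩ | ⟨rfl, rfl⟩ | ⟨rfl, rfl⟩)
            · exact hcyc z
            · rw [← hj]; exact hin
            · exact hout
        exact d1_iso hn h3 c x hcinj hx hcov i₀ hchar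
      · -- j₀ = i₀ - 2 : not primitive, contradiction
        exfalso
        have hj : j₀ = i₀ - 2 := by linear_combination hcase
        have hidx : ∀ v : V, ∃ z, v ≠ x → v = c z := by
          intro v
          rcases hcov v with rfl | ⟨z, rfl⟩
          · exact ⟨0, fun h => absurd rfl h⟩
          · exact ⟨z, fun _ => rfl⟩
        choose idx hidxs using hidx
        set φ : V → ZMod (n - 1) := fun v => if v = x then i₀ - 1 else idx v with hφdef
        have hφc : ∀ z, φ (c z) = z := by
          intro z
          have h1 : c z ≠ x := hx z
          have h2 := hidxs (c z) h1
          simp only [hφdef, if_neg h1]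
          exact (hcinj h2).symm
        have hφx : φ x = i₀ - 1 := by simp [hφdef]
        have hstep : ∀ u v, D u v → φ v = φ u + 1 := by
          intro u v hD'
          rcases hcov u with rfl | ⟨z, rfl⟩
          · rcases hcov v with rfl | ⟨z', rfl⟩
            · exact absurd hD' hxloop
            · have := hP z' i₀ hD' hout
              subst this
              rw [hφc, hφx]
              ring
          · rcases hcov v with rfl | ⟨z', rfl⟩
            · have := hQ z j₀ hD' hin
              subst this
              rw [hφc, hφx, hj]
              ring
            · have := hchord hD'
              subst this
              rw [hφc, hφc]
        have hwalkφ : ∀ k (u v : V), HasWalk D k u v → φ v = φ u + (k : ℕ) := by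
          intro k
          induction k with
          | zero =>
            intro u v h
            have h' : u = v := h
            rw [← h', Nat.cast_zero, add_zero]
          | succ k ih =>
            rintro u v ⟨w, hw, hwalk⟩
            have h1 := hstep u w hw
            have h2 := ih w v hwalk
            rw [h2, h1]
            push_cast
            ring
        have h1 := hwalkφ (expnt D) (c 0) (c 0) (hwexp.2 _ _)
        have h2 := hwalkφ (expnt D) (c 0) (c 1) (hwexp.2 _ _)
        rw [hφc] at h1 h2
        rw [hφc] at h2
        have h01 : (1 : ZMod (n - 1)) = 0 := by
          rw [h2, ← h1]
        have hdvd : (n - 1) ∣ 1 := by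
          rw [show (1 : ZMod (n - 1)) = ((1 : ℕ) : ZMod (n - 1)) by push_cast; rfl] at h01
          exact (ZMod.natCast_eq_zero_iff 1 (n - 1)).mp h01
        have := Nat.le_of_dvd one_pos hdvd
        omega
    · -- two out-arcs : flip is a D2 pattern
      exfalso
      push_neg at hP
      obtain ⟨i, i', hi, hi', hne⟩ := hP
      have p1 := hpairs hin hi
      have p2 := hpairs hin hi'
      have houtA : D x (c (j₀ + 1)) ∧ D x (c (j₀ + 2)) := by
        rcases p1 with h1 | h1 <;> rcases p2 with h2 | h2
        · exfalso; apply hne; linear_combination h2 - h1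
        · constructor
          · have : i = j₀ + 1 := by linear_combination -h1
            rwa [this] at hi
          · have : i' = j₀ + 2 := by linear_combination -h2
            rwa [this] at hi'
        · constructor
          · have : i' = j₀ + 1 := by linear_combination -h2
            rwa [this] at hi'
          · have : i = j₀ + 2 := by linear_combination -h1
            rwa [this] at hi
        · exfalso; apply hne; linear_combination h2 - h1
      set E : V → V → Prop := fun a b => D b a with hEdef
      set c' : ZMod (n - 1) → V := fun z => c (-z) with hc'def
      have hcov' : ∀ v : V, v = x ∨ ∃ z, v = c' z := by
        intro v
        rcases hcov v with rfl | ⟨z, rfl⟩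
        · exact Or.inl rfl
        · refine Or.inr ⟨-z, ?_⟩
          show c z = c (- - z)
          rw [neg_neg]
      have hcyc' : ∀ z, E (c' z) (c' (z + 1)) := by
        intro z
        show D (c (-(z + 1))) (c (-z))
        have := hcyc (-(z + 1))
        have e : -(z + 1) + 1 = -z := by ring
        rwa [e] at this
      have hin1' : E (c' ((-j₀) - 1)) x := by
        show D x (c (-((-j₀) - 1)))
        have e : -((-j₀) - 1) = j₀ + 1 := by ring
        rw [e]
        exact houtA.1
      have hin2' : E (c' ((-j₀) - 2)) x := by
        show D x (c (-((-j₀) - 2)))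
        have e : -((-j₀) - 2) = j₀ + 2 := by ring
        rw [e]
        exact houtA.2
      have hout' : E x (c' (-j₀)) := by
        show D (c (- - j₀)) x
        rw [neg_neg]
        exact hin
      have hallE := d2_embed hn h3 c' x hcov' hcyc' (-j₀) hin1' hin2' hout'
      apply hfalse_of_d2
      intro u v
      exact walk_flip (hallE v u)
  · -- two in-arcs : D2 pattern
    exfalso
    push_neg at hQ
    obtain ⟨j, j', hj, hj', hne⟩ := hQ
    have p1 := hpairs hj hout
    have p2 := hpairs hj' hout
    have hinB : D (c (i₀ - 1)) x ∧ D (c (i₀ - 2)) x := by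
      rcases p1 with h1 | h1 <;> rcases p2 with h2 | h2
      · exfalso; apply hne; linear_combination h1 - h2
      · constructor
        · have : j = i₀ - 1 := by linear_combination h1
          rwa [this] at hj
        · have : j' = i₀ - 2 := by linear_combination h2
          rwa [this] at hj'
      · constructor
        · have : j' = i₀ - 1 := by linear_combination h2
          rwa [this] at hj'
        · have : j = i₀ - 2 := by linear_combination h1
          rwa [this] at hj
      · exfalso; apply hne; linear_combination h1 - h2
    exact hfalse_of_d2 (d2_embed hn h3 c x hcov hcyc i₀ hinB.1 hinB.2 hout)

end S4d


/-- for a primitive digraph of order `n ≥ 3`,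
`exp(D) = (n-1)² + 1` iff `D ≅ D_1`. -/
theorem stmt2 {V : Type*} [Fintype V] (n : ℕ) (hn : Fintype.card V = n) (h3 : 3 ≤ n)
    (D : V → V → Prop) (hD : IsPrimitive D) :
    expnt D = (n - 1) ^ 2 + 1 ↔ DigraphIso D (D1 n) := by
  constructor
  · exact fun h => hard_dir hn h3 hD h
  · intro h
    rw [iso_expnt h, expnt_D1 h3]
end

section
/- Let D be a primitive digraph of order n ≥ 6 whose set of cycle lengths is exactly {g, q}, where 1 ≤ g < q ≤ n − 1. Then exp(D) ≤ 2n − 2 + (g − 1)(n − 3). -/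
variable {V : Type*}

lemma myTrans {D : V → V → Prop} :
    ∀ {k l : ℕ} {u w v : V}, HasWalk D k u w → HasWalk D l w v → HasWalk D (k + l) u v := by
  intro k
  induction k with
  | zero =>
    intro l u w v h1 h2
    have : u = w := h1
    subst this
    simpa using h2
  | succ k ih =>
    intro l u w v h1 h2
    obtain ⟨x, hx, hw⟩ := h1
    have : HasWalk D (k + l + 1) u v := ⟨x, hx, ih hw h2⟩
    simpa [Nat.add_right_comm] using this

lemma walk_toFun {D : V → V → Prop} :
    ∀ {k : ℕ} {u v : V}, HasWalk D k u v →
      ∃ f : ℕ → V, f 0 = u ∧ f k = v ∧ ∀ i < k, D (f i) (f (i + 1)) := by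
  intro k
  induction k with
  | zero =>
    intro u v h
    exact ⟨fun _ => u, rfl, (show u = v from h) ▸ rfl, by simp⟩
  | succ k ih =>
    intro u v h
    obtain ⟨w, hw, hwalk⟩ := h
    obtain ⟨f', h0, hk, ha⟩ := ih hwalk
    refine ⟨fun i => if i = 0 then u else f' (i - 1), by simp, by simp [hk], ?_⟩
    intro i hi
    rcases Nat.eq_zero_or_pos i with rfl | hpos
    · simpa [h0] using hw
    · have h1 : ¬ (i = 0) := by omega
      have h2 : ¬ (i + 1 = 0) := by omega
      simp only [h1, h2, if_false]
      have : i - 1 < k := by omega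
      have := ha (i - 1) this
      have heq : i - 1 + 1 = i := by omega
      rw [heq] at this
      simpa [show i + 1 - 1 = i from by omega] using this

lemma walk_ofFun {D : V → V → Prop} :
    ∀ {k : ℕ} {u v : V} (f : ℕ → V), f 0 = u → f k = v →
      (∀ i < k, D (f i) (f (i + 1))) → HasWalk D k u v := by
  intro k
  induction k with
  | zero =>
    intro u v f h0 hk _
    exact (h0 ▸ hk : (u : V) = v)
  | succ k ih =>
    intro u v f h0 hk ha
    refine ⟨f 1, h0 ▸ ha 0 (by omega), ?_⟩
    exact ih (fun i => f (i + 1)) rfl hk (fun i hi => ha (i + 1) (by omega))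

lemma loop_pow {D : V → V → Prop} {c : ℕ} {u : V} (h : HasWalk D c u u) :
    ∀ a : ℕ, HasWalk D (a * c) u u := by
  intro a
  induction a with
  | zero =>
    show HasWalk D (0 * c) u u
    rw [Nat.zero_mul]
    exact (rfl : u = u)
  | succ a ih =>
    have := myTrans ih h
    simpa [Nat.succ_mul] using this

lemma walk_shortcut {D : V → V → Prop} {k i j : ℕ} (f : ℕ → V)
    (hf : ∀ t < k, D (f t) (f (t + 1))) (hij : i ≤ j) (hjk : j ≤ k) (he : f i = f j) :
    HasWalk D (i + (k - j)) (f 0) (f k) := by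
  apply walk_ofFun (fun t => if t ≤ i then f t else f (t + (j - i)))
  · simp
  · by_cases hkj : k = j
    · subst hkj
      simp only [Nat.sub_self, Nat.add_zero, le_refl, if_pos]
      exact he
    · have h1 : ¬ (i + (k - j) ≤ i) := by omega
      simp only [h1, if_neg, if_false]
      congr 1
      omega
  · intro t ht
    by_cases h1 : t + 1 ≤ i
    · have h0 : t ≤ i := by omega
      simp only [h0, h1, if_pos]
      exact hf t (by omega)
    · by_cases h0 : t ≤ i
      · -- t = i, t+1 = i+1 > i
        have hti : t = i := by omega
        subst hti
        simp only [le_refl, if_pos, h1, if_neg, if_false]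
        rw [he]
        have : t + 1 + (j - t) = j + 1 := by omega
        rw [this]
        exact hf j (by omega)
      · simp only [h0, h1, if_neg, if_false]
        have : t + 1 + (j - i) = (t + (j - i)) + 1 := by omega
        rw [this]
        exact hf (t + (j - i)) (by omega)

lemma cycle_loops [DecidableEq V] {D : V → V → Prop} {ℓ : ℕ} (h : HasCycleOfLength D ℓ) :
    ∃ S : Finset V, S.card = ℓ ∧ ∀ y ∈ S, HasWalk D ℓ y y := by
  obtain ⟨hpos, f, hdist, harc, hwrap⟩ := h
  refine ⟨(Finset.range ℓ).image f, ?_, ?_⟩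
  · rw [Finset.card_image_of_injOn, Finset.card_range]
    intro a ha b hb hab
    simp only [Finset.coe_range, Set.mem_Iio] at ha hb
    exact hdist a ha b hb hab
  · intro y hy
    obtain ⟨t, ht, rfl⟩ := Finset.mem_image.mp hy
    rw [Finset.mem_range] at ht
    apply walk_ofFun (fun m => f ((t + m) % ℓ))
    · simp [Nat.mod_eq_of_lt ht]
    · simp [Nat.add_mod_right, Nat.mod_eq_of_lt ht]
    · intro m hm
      set r := (t + m) % ℓ with hr
      have hrl : r < ℓ := Nat.mod_lt _ hpos
      have hdiv := Nat.mod_add_div (t + m) ℓ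
      by_cases hcase : r + 1 = ℓ
      · have hnext : (t + (m + 1)) % ℓ = 0 := by
          have h2 : t + (m + 1) = ℓ * ((t + m) / ℓ + 1) := by
            rw [Nat.mul_add, Nat.mul_one]
            omega
          rw [h2, Nat.mul_mod_right]
        rw [hnext]
        have : r = ℓ - 1 := by omega
        rw [this] at *
        exact hwrap
      · have hnext : (t + (m + 1)) % ℓ = r + 1 := by
          have h2 : t + (m + 1) = (r + 1) + ℓ * ((t + m) / ℓ) := by omega
          rw [h2, Nat.add_mul_mod_self_left, Nat.mod_eq_of_lt (by omega)]
        rw [hnext]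
        exact harc r (by omega)

lemma closed_reduce {D : V → V → Prop} {g q : ℕ} (hC : cycleLengths D = {g, q}) :
    ∀ k, 0 < k → ∀ u : V, HasWalk D k u u → (HasWalk D g u u ∨ HasWalk D q u u) := by
  intro k
  induction k using Nat.strong_induction_on with
  | _ k ih =>
  intro hk u hw
  obtain ⟨f, hf0, hfk, hfa⟩ := walk_toFun hw
  by_cases hinj : ∀ i < k, ∀ j < k, f i = f j → i = j
  · have hwrap : D (f (k - 1)) (f 0) := by
      have := hfa (k - 1) (by omega)
      rw [show k - 1 + 1 = k from by omega] at this
      rwa [show f k = f 0 from by rw [hf0, hfk]] at this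
    have hcyc : k ∈ cycleLengths D :=
      ⟨hk, f, hinj, fun i hi => hfa i (by omega), hwrap⟩
    rw [hC] at hcyc
    rcases hcyc with rfl | rfl
    · exact Or.inl hw
    · exact Or.inr hw
  · push_neg at hinj
    obtain ⟨i, hi, j, hj, he, hne⟩ := hinj
    obtain ⟨a, b, hab, hbk, heq⟩ : ∃ a b, a < b ∧ b < k ∧ f a = f b := by
      rcases hne.lt_or_gt with h | h
      · exact ⟨i, j, h, hj, he⟩
      · exact ⟨j, i, h, hi, he.symm⟩
    have hwalk := walk_shortcut f hfa hab.le hbk.le heq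
    rw [hf0, hfk] at hwalk
    exact ih (a + (k - b)) (by omega) (by omega) u hwalk

lemma closed_sum {D : V → V → Prop} {g q : ℕ} (hC : cycleLengths D = {g, q}) :
    ∀ k, 0 < k → ∀ u : V, HasWalk D k u u → ∃ a b : ℕ, k = a * g + b * q := by
  intro k
  induction k using Nat.strong_induction_on with
  | _ k ih =>
  intro hk u hw
  obtain ⟨f, hf0, hfk, hfa⟩ := walk_toFun hw
  by_cases hinj : ∀ i < k, ∀ j < k, f i = f j → i = j
  · have hwrap : D (f (k - 1)) (f 0) := by
      have := hfa (k - 1) (by omega)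
      rw [show k - 1 + 1 = k from by omega] at this
      rwa [show f k = f 0 from by rw [hf0, hfk]] at this
    have hcyc : k ∈ cycleLengths D :=
      ⟨hk, f, hinj, fun i hi => hfa i (by omega), hwrap⟩
    rw [hC] at hcyc
    rcases hcyc with rfl | rfl
    · exact ⟨1, 0, by ring⟩
    · exact ⟨0, 1, by ring⟩
  · push_neg at hinj
    obtain ⟨i, hi, j, hj, he, hne⟩ := hinj
    obtain ⟨a, b, hab, hbk, heq⟩ : ∃ a b, a < b ∧ b < k ∧ f a = f b := by
      rcases hne.lt_or_gt with h | h
      · exact ⟨i, j, h, hj, he⟩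
      · exact ⟨j, i, h, hi, he.symm⟩
    -- inner closed walk at f a of length b - a
    have hw1 : HasWalk D (b - a) (f a) (f a) := by
      apply walk_ofFun (fun m => f (a + m)) rfl
      · rw [show a + (b - a) = b from by omega]
        exact heq.symm
      · intro m hm
        exact hfa (a + m) (by omega)
    -- outer closed walk at u of length a + (k - b)
    have hw2 := walk_shortcut f hfa hab.le hbk.le heq
    rw [hf0, hfk] at hw2
    obtain ⟨a1, b1, h1⟩ := ih (b - a) (by omega) (by omega) (f a) hw1
    obtain ⟨a2, b2, h2⟩ := ih (a + (k - b)) (by omega) (by omega) u hw2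
    exact ⟨a1 + a2, b1 + b2, by
      have : k = (b - a) + (a + (k - b)) := by omega
      rw [this, h1, h2]; ring⟩

lemma walk_succ {D : V → V → Prop} {K : ℕ} (hK : 1 ≤ K)
    (h : ∀ u v : V, HasWalk D K u v) : ∀ u v : V, HasWalk D (K + 1) u v := by
  intro u v
  obtain ⟨k', rfl⟩ : ∃ k', K = k' + 1 := ⟨K - 1, by omega⟩
  obtain ⟨w, hw, -⟩ := h u u
  exact ⟨w, hw, h w v⟩

lemma dist_to_set [Fintype V] [DecidableEq V] {D : V → V → Prop} {K : ℕ}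
    (hall : ∀ u v : V, HasWalk D K u v) (S : Finset V) (hS : S.Nonempty) (u : V) :
    ∃ y ∈ S, ∃ p, p + S.card ≤ Fintype.card V ∧ HasWalk D p u y := by
  obtain ⟨y0, hy0⟩ := hS
  set P := {k : ℕ | ∃ y ∈ S, HasWalk D k u y} with hP
  have hPne : P.Nonempty := ⟨K, y0, hy0, hall u y0⟩
  obtain ⟨y, hy, hwalk⟩ : ∃ y ∈ S, HasWalk D (sInf P) u y := Nat.sInf_mem hPne
  set m := sInf P with hm
  refine ⟨y, hy, m, ?_, hwalk⟩
  obtain ⟨f, hf0, hfm, hfa⟩ := walk_toFun hwalk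
  have havoid : ∀ i < m, f i ∉ S := by
    intro i him hiS
    have : m ≤ i := Nat.sInf_le ⟨f i, hiS, walk_ofFun f hf0 rfl (fun t ht => hfa t (by omega))⟩
    omega
  have hinj : ∀ i < m, ∀ j < m, f i = f j → i = j := by
    intro i hi j hj he
    by_contra hne
    obtain ⟨a, b, hab, hbm, heq⟩ : ∃ a b, a < b ∧ b < m ∧ f a = f b := by
      rcases Ne.lt_or_gt hne with h | h
      · exact ⟨i, j, h, hj, he⟩
      · exact ⟨j, i, h, hi, he.symm⟩
    have hwalk' := walk_shortcut f hfa hab.le hbm.le heq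
    rw [hf0, hfm] at hwalk'
    have : m ≤ a + (m - b) := Nat.sInf_le ⟨y, hy, hwalk'⟩
    omega
  have hcard : ((Finset.range m).image f).card = m := by
    rw [Finset.card_image_of_injOn, Finset.card_range]
    intro a ha b hb hab
    simp only [Finset.coe_range, Set.mem_Iio] at ha hb
    exact hinj a ha b hb hab
  have hdisj : Disjoint ((Finset.range m).image f) S := by
    rw [Finset.disjoint_left]
    intro x hx hxS
    obtain ⟨i, hi, rfl⟩ := Finset.mem_image.mp hx
    rw [Finset.mem_range] at hi
    exact havoid i hi hxS
  calc m + S.card = (((Finset.range m).image f) ∪ S).card := by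
        rw [Finset.card_union_of_disjoint hdisj, hcard]
    _ ≤ Fintype.card V := by
        rw [← Finset.card_univ]
        exact Finset.card_le_card (Finset.subset_univ _)

lemma mcnugget {g q : ℕ} (hcop : Nat.Coprime g q) (hg : 1 ≤ g) {N : ℕ}
    (hN : (g - 1) * (q - 1) ≤ N) : ∃ a b : ℕ, N = a * g + b * q := by
  rcases Nat.eq_or_lt_of_le hg with h1 | h2
  · -- g = 1
    exact ⟨N, 0, by rw [← h1]; ring⟩
  · -- g ≥ 2
    have hgpos : 0 < g := by omega
    haveI : NeZero g := ⟨by omega⟩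
    have hq1 : 1 ≤ q := by
      by_contra h
      have : q = 0 := by omega
      subst this
      have := Nat.coprime_zero_right g |>.mp hcop
      omega
    set x : (ZMod g)ˣ := ZMod.unitOfCoprime q hcop.symm with hx
    set b : ℕ := ((N : ZMod g) * ((x⁻¹ : (ZMod g)ˣ) : ZMod g)).val with hb
    have hblt : b < g := ZMod.val_lt _
    have hmod : ((b * q : ℕ) : ZMod g) = (N : ZMod g) := by
      push_cast
      rw [hb]
      rw [ZMod.natCast_val, ZMod.cast_id]
      have hq : ((q : ℕ) : ZMod g) = (x : ZMod g) := (ZMod.coe_unitOfCoprime q hcop.symm).symm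
      rw [hq, mul_assoc, Units.inv_mul, mul_one]
    have hMe : N ≡ b * q [MOD g] := (ZMod.natCast_eq_natCast_iff _ _ _).mp hmod.symm
    have hbub : b * q ≤ N + g - 1 := by
      have h1 : b * q ≤ (g - 1) * q := Nat.mul_le_mul_right q (by omega)
      have h2 : (g - 1) * q = (g - 1) * (q - 1) + (g - 1) := by
        obtain ⟨q', rfl⟩ : ∃ q', q = q' + 1 := ⟨q - 1, by omega⟩
        simp [Nat.mul_add]
      omega
    rcases le_or_gt (b * q) N with hle | hlt
    · have hdvd : g ∣ N - b * q := (Nat.modEq_iff_dvd' hle).mp hMe.symm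
      refine ⟨(N - b * q) / g, b, ?_⟩
      rw [Nat.div_mul_cancel hdvd]
      omega
    · exfalso
      have hdvd : g ∣ b * q - N := (Nat.modEq_iff_dvd' hlt.le).mp hMe
      have : b * q - N = 0 := Nat.eq_zero_of_dvd_of_lt hdvd (by omega)
      omega

lemma key1 {n g q p1 p2 : ℕ} (h6 : 6 ≤ n) (hg1 : 1 ≤ g) (hgq : g < q) (hq : q ≤ n - 1)
    (hp1 : p1 + q ≤ n) (hp2 : p2 + 1 ≤ n) :
    p1 + p2 + (g - 1) * (q - 1) ≤ n + 1 + g * (n - 3) := by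
  have hq1 : 1 ≤ q := by omega
  have hgz : (1:ℤ) ≤ (g:ℤ) := by exact_mod_cast hg1
  have hgqz : (g:ℤ) < (q:ℤ) := by exact_mod_cast hgq
  have hqz : (q:ℤ) + 1 ≤ (n:ℤ) := by exact_mod_cast (show q + 1 ≤ n from by omega)
  have hp1z : (p1:ℤ) + (q:ℤ) ≤ (n:ℤ) := by exact_mod_cast hp1
  have hp2z : (p2:ℤ) + 1 ≤ (n:ℤ) := by exact_mod_cast hp2
  have hnz : (6:ℤ) ≤ (n:ℤ) := by exact_mod_cast h6
  zify [hg1, hq1, show 3 ≤ n from by omega]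
  rcases le_or_gt (q : ℤ) ((n : ℤ) - 2) with h | h
  · nlinarith [mul_nonneg (show (0:ℤ) ≤ (g:ℤ) - 1 by omega) (show (0:ℤ) ≤ (n:ℤ) - 2 - q by omega)]
  · have hqe : (q : ℤ) = (n : ℤ) - 1 := by omega
    nlinarith [hqe]

lemma key2 {n g q p1 p2 : ℕ} (h6 : 6 ≤ n) (hg1 : 1 ≤ g) (hgq : g < q) (hq : q ≤ n - 1)
    (hp1 : p1 + g ≤ n) (hp2 : p2 + 1 ≤ n) :
    p1 + p2 + (g - 1) * (q - 1) ≤ n + 1 + g * (n - 3) := by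
  have hq1 : 1 ≤ q := by omega
  have hgz : (1:ℤ) ≤ (g:ℤ) := by exact_mod_cast hg1
  have hgqz : (g:ℤ) < (q:ℤ) := by exact_mod_cast hgq
  have hqz : (q:ℤ) + 1 ≤ (n:ℤ) := by exact_mod_cast (show q + 1 ≤ n from by omega)
  have hp1z : (p1:ℤ) + (g:ℤ) ≤ (n:ℤ) := by exact_mod_cast hp1
  have hp2z : (p2:ℤ) + 1 ≤ (n:ℤ) := by exact_mod_cast hp2
  have hnz : (6:ℤ) ≤ (n:ℤ) := by exact_mod_cast h6
  zify [hg1, hq1, show 3 ≤ n from by omega]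
  nlinarith [mul_nonneg (show (0:ℤ) ≤ (g:ℤ) - 1 by omega) (show (0:ℤ) ≤ (n:ℤ) - 1 - q by omega)]

/-- a primitive digraph of order `n ≥ 6` with cycle length set
exactly `{g, q}`, `1 ≤ g < q ≤ n - 1`, has `exp(D) ≤ 2n - 2 + (g-1)(n-3)`. -/
theorem stmt7 {V : Type*} [Fintype V] (n g q : ℕ) (hn : Fintype.card V = n)
    (h6 : 6 ≤ n) (D : V → V → Prop) (hD : IsPrimitive D)
    (hC : cycleLengths D = {g, q}) (hg1 : 1 ≤ g) (hgq : g < q) (hq : q ≤ n - 1) :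
    (expnt D : ℤ) ≤ 2 * (n : ℤ) - 2 + ((g : ℤ) - 1) * ((n : ℤ) - 3) := by
  classical
  obtain ⟨K, hK1, hKall⟩ := hD
  have hKall' := walk_succ hK1 hKall
  have hVne : Nonempty V := by
    rw [← Fintype.card_pos_iff]
    omega
  obtain ⟨u0⟩ := hVne
  -- gcd(g, q) = 1
  have hcop : Nat.Coprime g q := by
    obtain ⟨a1, b1, hab1⟩ := closed_sum hC K (by omega) u0 (hKall u0 u0)
    obtain ⟨a2, b2, hab2⟩ := closed_sum hC (K + 1) (by omega) u0 (hKall' u0 u0)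
    have hd1 : Nat.gcd g q ∣ K := by
      rw [hab1]
      exact dvd_add (Dvd.dvd.mul_left (Nat.gcd_dvd_left g q) a1)
        (Dvd.dvd.mul_left (Nat.gcd_dvd_right g q) b1)
    have hd2 : Nat.gcd g q ∣ K + 1 := by
      rw [hab2]
      exact dvd_add (Dvd.dvd.mul_left (Nat.gcd_dvd_left g q) a2)
        (Dvd.dvd.mul_left (Nat.gcd_dvd_right g q) b2)
    have hone : Nat.gcd g q ∣ 1 := by
      have := Nat.dvd_sub hd2 hd1
      simpa using this
    exact Nat.dvd_one.mp hone
  -- a g-cycle and a q-cycle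
  have hgmem : HasCycleOfLength D g := by
    have : g ∈ cycleLengths D := by rw [hC]; exact Set.mem_insert g {q}
    exact this
  have hqmem : HasCycleOfLength D q := by
    have : q ∈ cycleLengths D := by rw [hC]; exact Set.mem_insert_of_mem g rfl
    exact this
  obtain ⟨Sg, hSgcard, hSgloop⟩ := cycle_loops hgmem
  obtain ⟨Sq, hSqcard, hSqloop⟩ := cycle_loops hqmem
  set T := n + 1 + g * (n - 3) with hT
  have hmem : T ∈ {k | 1 ≤ k ∧ ∀ u v, HasWalk D k u v} := by
    constructor
    · exact le_trans (by omega) (Nat.le_add_right (n + 1) _)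
    · intro u v
      rcases closed_reduce hC K (by omega) u (hKall u u) with hLu | hLu
      · -- u has a g-loop: go to the q-cycle, then to v
        obtain ⟨y, hy, p1, hp1, hw1⟩ := dist_to_set hKall Sq
          (Finset.card_pos.mp (by rw [hSqcard]; omega)) u
        obtain ⟨y2, hy2, p2, hp2, hw2⟩ := dist_to_set hKall {v}
          ⟨v, Finset.mem_singleton_self v⟩ y
        rw [Finset.mem_singleton] at hy2
        rw [hy2] at hw2
        rw [hSqcard, hn] at hp1
        rw [Finset.card_singleton, hn] at hp2
        have hkey : p1 + p2 + (g - 1) * (q - 1) ≤ T := key1 h6 hg1 hgq hq hp1 hp2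
        have hle : p1 + p2 ≤ T := by omega
        obtain ⟨a, b, hab⟩ := mcnugget hcop hg1 (N := T - (p1 + p2)) (by omega)
        have hwa : HasWalk D (a * g) u u := loop_pow hLu a
        have hwb : HasWalk D (b * q) y y := loop_pow (hSqloop y hy) b
        have hwalk : HasWalk D (a * g + (p1 + (b * q + p2))) u v :=
          myTrans hwa (myTrans hw1 (myTrans hwb hw2))
        have heq : a * g + (p1 + (b * q + p2)) = T := by
          have h' : a * g + (p1 + (b * q + p2)) = (a * g + b * q) + (p1 + p2) := by ring
          rw [h', ← hab, Nat.sub_add_cancel hle]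
        rwa [heq] at hwalk
      · -- u has a q-loop: go to the g-cycle, then to v
        obtain ⟨y, hy, p1, hp1, hw1⟩ := dist_to_set hKall Sg
          (Finset.card_pos.mp (by rw [hSgcard]; omega)) u
        obtain ⟨y2, hy2, p2, hp2, hw2⟩ := dist_to_set hKall {v}
          ⟨v, Finset.mem_singleton_self v⟩ y
        rw [Finset.mem_singleton] at hy2
        rw [hy2] at hw2
        rw [hSgcard, hn] at hp1
        rw [Finset.card_singleton, hn] at hp2
        have hkey : p1 + p2 + (g - 1) * (q - 1) ≤ T := key2 h6 hg1 hgq hq hp1 hp2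
        have hle : p1 + p2 ≤ T := by omega
        have hkey2 : p1 + p2 + (q - 1) * (g - 1) ≤ T := by
          rw [Nat.mul_comm (q - 1) (g - 1)]; exact hkey
        obtain ⟨a, b, hab⟩ := mcnugget hcop.symm (by omega) (N := T - (p1 + p2))
          (by omega)
        have hwa : HasWalk D (a * q) u u := loop_pow hLu a
        have hwb : HasWalk D (b * g) y y := loop_pow (hSgloop y hy) b
        have hwalk : HasWalk D (a * q + (p1 + (b * g + p2))) u v :=
          myTrans hwa (myTrans hw1 (myTrans hwb hw2))
        have heq : a * q + (p1 + (b * g + p2)) = T := by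
          have h' : a * q + (p1 + (b * g + p2)) = (a * q + b * g) + (p1 + p2) := by ring
          rw [h', ← hab, Nat.sub_add_cancel hle]
        rwa [heq] at hwalk
  have hle : expnt D ≤ T := Nat.sInf_le hmem
  have hTz : (T : ℤ) = (n : ℤ) + 1 + (g : ℤ) * ((n : ℤ) - 3) := by
    rw [hT]
    push_cast [show 3 ≤ n from by omega]
    ring
  calc (expnt D : ℤ) ≤ (T : ℤ) := by exact_mod_cast hle
    _ = 2 * (n : ℤ) - 2 + ((g : ℤ) - 1) * ((n : ℤ) - 3) := by rw [hTz]; ring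
end

section
/- Let n and g be coprime positive integers with n ≥ 2g and g ≥ 1, and let k be an integer with k ≥ g + 1 and g + k − 1 ≤ n. Let H be the digraph on vertices v_1, …, v_n consisting of the n-cycle with arcs v_i → v_{i+1} for 1 ≤ i ≤ n−1 and v_n → v_1, together with the two extra arcs v_g → v_1 and v_{k+g−1} → v_k (so H contains two vertex-disjoint cycles of length g). Then H is primitive and exp(H) ≤ (n−1)g + n − 2g. -/
variable {V : Type*}

/-- The digraph `H` on `Fin n` (vertex `v_i` is index `i - 1`): the `n`-cycle
`v_1 → v_2 → ⋯ → v_n → v_1` together with the two extra arcs `v_g → v_1` and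
`v_{k+g-1} → v_k`, creating two vertex-disjoint `g`-cycles. -/
def Hgraph (n g k : ℕ) : Fin n → Fin n → Prop :=
  fun a b => ((b : ℕ) = (a : ℕ) + 1 ∨ ((a : ℕ) = n - 1 ∧ (b : ℕ) = 0))
    ∨ ((a : ℕ) = g - 1 ∧ (b : ℕ) = 0)
    ∨ ((a : ℕ) = k + g - 2 ∧ (b : ℕ) = k - 1)

theorem hasWalk_concat {D : V → V → Prop} :
    ∀ {a : ℕ} {b : ℕ} {u w v : V}, HasWalk D a u w → HasWalk D b w v → HasWalk D (a + b) u v := by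
  intro a
  induction a with
  | zero =>
    intro b u w v h1 h2
    have : u = w := h1
    subst this
    simpa using h2
  | succ a ih =>
    intro b u w v h1 h2
    obtain ⟨x, hx, h1'⟩ := h1
    rw [Nat.succ_add]
    exact ⟨x, hx, ih h1' h2⟩

theorem hasWalk_loop_mul {D : V → V → Prop} {L : ℕ} {u : V} (h : HasWalk D L u u) :
    ∀ t : ℕ, HasWalk D (t * L) u u := by
  intro t
  induction t with
  | zero => rw [Nat.zero_mul]; exact rfl
  | succ t ih =>
    have := hasWalk_concat ih h
    rwa [show t * L + L = (t+1) * L by ring] at this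

theorem hstep (n g k : ℕ) (hn : 0 < n) (u : Fin n) :
    Hgraph n g k u ⟨(u.val + 1) % n, Nat.mod_lt _ hn⟩ := by
  by_cases h : u.val + 1 < n
  · left; left
    simp only [Nat.mod_eq_of_lt h]
  · have hu : u.val = n - 1 := by have := u.isLt; omega
    left; right
    refine ⟨hu, ?_⟩
    simp only
    have h2 : u.val + 1 = n := by have := u.isLt; omega
    simp [h2]

theorem hcycle (n g k : ℕ) (hn : 0 < n) :
    ∀ (m : ℕ) (u : Fin n), HasWalk (Hgraph n g k) m u ⟨(u.val + m) % n, Nat.mod_lt _ hn⟩ := by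
  intro m
  induction m with
  | zero =>
    intro u
    have : (⟨(u.val + 0) % n, Nat.mod_lt _ hn⟩ : Fin n) = u :=
      Fin.ext (by simp [Nat.mod_eq_of_lt u.isLt])
    rw [this]
    exact rfl
  | succ m ih =>
    intro u
    refine ⟨_, hstep n g k hn u, ?_⟩
    have h2 : ((u.val + 1) % n + m) % n = (u.val + (m + 1)) % n := by
      rw [Nat.mod_add_mod]
      congr 1
      omega
    have := ih ⟨(u.val + 1) % n, Nat.mod_lt _ hn⟩
    simpa only [Fin.mk.injEq, h2] using this

theorem hcycle' (n g k : ℕ) (hn : 0 < n) (m : ℕ) (u v : Fin n)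
    (hv : (u.val + m) % n = v.val) : HasWalk (Hgraph n g k) m u v := by
  have h := hcycle n g k hn m u
  have he : (⟨(u.val + m) % n, Nat.mod_lt _ hn⟩ : Fin n) = v := Fin.ext hv
  rwa [he] at h

theorem loopN (n g k : ℕ) (hn : 0 < n) (u : Fin n) :
    HasWalk (Hgraph n g k) n u u :=
  hcycle' n g k hn n u u (by rw [Nat.add_mod_right]; exact Nat.mod_eq_of_lt u.isLt)

theorem loopA (n g k : ℕ) (hn : 0 < n) (hg : 1 ≤ g) (hgn : g ≤ n) (u : Fin n)
    (hu : u.val < g) : HasWalk (Hgraph n g k) g u u := by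
  have hg1 : g - 1 < n := by omega
  have w1 : HasWalk (Hgraph n g k) (g - 1 - u.val) u ⟨g - 1, hg1⟩ :=
    hcycle' n g k hn _ _ _ (by
      show (u.val + (g - 1 - u.val)) % n = g - 1
      rw [show u.val + (g - 1 - u.val) = g - 1 by omega]
      exact Nat.mod_eq_of_lt hg1)
  have w2 : HasWalk (Hgraph n g k) 1 ⟨g - 1, hg1⟩ ⟨0, hn⟩ :=
    ⟨⟨0, hn⟩, Or.inr (Or.inl ⟨rfl, rfl⟩), rfl⟩
  have w3 : HasWalk (Hgraph n g k) u.val ⟨0, hn⟩ u :=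
    hcycle' n g k hn _ _ _ (by simp [Nat.mod_eq_of_lt u.isLt])
  have h := hasWalk_concat w1 (hasWalk_concat w2 w3)
  rwa [show g - 1 - u.val + (1 + u.val) = g by omega] at h

theorem loopB (n g k : ℕ) (hn : 0 < n) (hg : 1 ≤ g) (hk : g + 1 ≤ k) (hkg : g + k - 1 ≤ n)
    (u : Fin n) (h1 : k - 1 ≤ u.val) (h2 : u.val < k + g - 1) :
    HasWalk (Hgraph n g k) g u u := by
  have hb1 : k + g - 2 < n := by omega
  have hb2 : k - 1 < n := by omega
  have w1 : HasWalk (Hgraph n g k) (k + g - 2 - u.val) u ⟨k + g - 2, hb1⟩ :=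
    hcycle' n g k hn _ _ _ (by
      show (u.val + (k + g - 2 - u.val)) % n = k + g - 2
      rw [show u.val + (k + g - 2 - u.val) = k + g - 2 by omega]
      exact Nat.mod_eq_of_lt hb1)
  have w2 : HasWalk (Hgraph n g k) 1 ⟨k + g - 2, hb1⟩ ⟨k - 1, hb2⟩ :=
    ⟨⟨k - 1, hb2⟩, Or.inr (Or.inr ⟨rfl, rfl⟩), rfl⟩
  have w3 : HasWalk (Hgraph n g k) (u.val - (k - 1)) ⟨k - 1, hb2⟩ u :=
    hcycle' n g k hn _ _ _ (by
      show (k - 1 + (u.val - (k - 1))) % n = u.val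
      rw [show k - 1 + (u.val - (k - 1)) = u.val by omega]
      exact Nat.mod_eq_of_lt u.isLt)
  have h := hasWalk_concat w1 (hasWalk_concat w2 w3)
  rwa [show k + g - 2 - u.val + (1 + (u.val - (k - 1))) = g by omega] at h

theorem rep (n g : ℕ) (hn : 2 ≤ n) (hg : 1 ≤ g) (hco : Nat.Coprime n g)
    (m : ℕ) (hm : (n - 1) * (g - 1) ≤ m) : ∃ a b : ℕ, a * n + b * g = m := by
  rcases eq_or_lt_of_le hg with hg1 | hg2
  · exact ⟨0, m, by rw [← hg1]; omega⟩
  · by_contra hc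
    push_neg at hc
    have hmem : m ∉ AddSubmonoid.closure ({n, g} : Set ℕ) := by
      rw [AddSubmonoid.mem_closure_pair]
      push_neg
      intro a b
      simpa [smul_eq_mul] using hc a b
    have hfrob := frobeniusNumber_pair hco hn hg2
    have hle : m ≤ n * g - n - g := hfrob.2 hmem
    obtain ⟨n', rfl⟩ : ∃ a, n = a + 1 := ⟨n - 1, by omega⟩
    obtain ⟨g', rfl⟩ : ∃ b, g = b + 1 := ⟨g - 1, by omega⟩
    simp only [Nat.add_sub_cancel] at hm
    have hNM : (n' + 1) * (g' + 1) = n' * g' + n' + g' + 1 := by ring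
    have hApos : 0 < n' * g' := Nat.mul_pos (by omega) (by omega)
    generalize hA : n' * g' = A at hm hNM hApos
    generalize hB : (n' + 1) * (g' + 1) = B at hle hNM
    omega

theorem key (n g k : ℕ) (hg : 1 ≤ g) (hn : 2 * g ≤ n) (hco : Nat.Coprime n g)
    (hk : g + 1 ≤ k) (hkg : g + k - 1 ≤ n) (u v : Fin n) :
    HasWalk (Hgraph n g k) ((n - 1) * g + (n - 2 * g)) u v := by
  have hn0 : 0 < n := by omega
  obtain ⟨d1, w, hd1, hw, hwk⟩ :
      ∃ (d1 : ℕ) (w : Fin n), d1 ≤ n - 2 * g ∧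
        (w.val < g ∨ (k - 1 ≤ w.val ∧ w.val < k + g - 1)) ∧
        HasWalk (Hgraph n g k) d1 u w := by
    rcases lt_or_ge u.val g with h | h
    · exact ⟨0, u, by omega, Or.inl h, rfl⟩
    rcases lt_or_ge u.val (k - 1) with h2 | h2
    · refine ⟨k - 1 - u.val, ⟨k - 1, by omega⟩, by omega,
        Or.inr ⟨by show k - 1 ≤ k - 1; omega, by show k - 1 < k + g - 1; omega⟩, ?_⟩
      exact hcycle' n g k hn0 _ _ _ (by
        show (u.val + (k - 1 - u.val)) % n = k - 1
        rw [show u.val + (k - 1 - u.val) = k - 1 by omega]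
        exact Nat.mod_eq_of_lt (by omega : k - 1 < n))
    rcases lt_or_ge u.val (k + g - 1) with h3 | h3
    · exact ⟨0, u, by omega, Or.inr ⟨h2, h3⟩, rfl⟩
    · refine ⟨n - u.val, ⟨0, hn0⟩, by omega, Or.inl (by show 0 < g; omega), ?_⟩
      exact hcycle' n g k hn0 _ _ _ (by
        show (u.val + (n - u.val)) % n = 0
        rw [show u.val + (n - u.val) = n by have := u.isLt; omega]
        exact Nat.mod_self n)
  have hd2 : (v.val + n - w.val) % n < n := Nat.mod_lt _ hn0
  have w2 : HasWalk (Hgraph n g k) ((v.val + n - w.val) % n) w v := by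
    apply hcycle' n g k hn0
    rw [Nat.add_mod_mod, show w.val + (v.val + n - w.val) = v.val + n by have := w.isLt; omega,
      Nat.add_mod_right]
    exact Nat.mod_eq_of_lt v.isLt
  set d2 := (v.val + n - w.val) % n
  have loopg : HasWalk (Hgraph n g k) g w w := by
    rcases hw with h | h
    · exact loopA n g k hn0 hg (by omega) w h
    · exact loopB n g k hn0 hg hk hkg w h.1 h.2
  have loopn : HasWalk (Hgraph n g k) n w w := loopN n g k hn0 w
  have e1 : (n - 1) * g = (n - 1) * (g - 1) + (n - 1) := by
    calc (n - 1) * g = (n - 1) * ((g - 1) + 1) := by rw [show g - 1 + 1 = g by omega]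
    _ = (n - 1) * (g - 1) + (n - 1) := by rw [Nat.mul_add, Nat.mul_one]
  obtain ⟨a, b, hab⟩ :
      ∃ a b : ℕ, a * n + b * g = (n - 1) * g + (n - 2 * g) - d1 - d2 := by
    apply rep n g (by omega) hg hco
    generalize hP : (n - 1) * (g - 1) = P at e1 ⊢
    generalize hQ : (n - 1) * g = Q at e1 ⊢
    omega
  have wloops : HasWalk (Hgraph n g k) (a * n + b * g) w w :=
    hasWalk_concat (hasWalk_loop_mul loopn a) (hasWalk_loop_mul loopg b)
  have h := hasWalk_concat hwk (hasWalk_concat wloops w2)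
  have hlen : d1 + (a * n + b * g + d2) = (n - 1) * g + (n - 2 * g) := by
    generalize hP : (n - 1) * (g - 1) = P at e1 hab
    generalize hQ : (n - 1) * g = Q at e1 hab ⊢
    generalize hA : a * n = A at hab ⊢
    generalize hBB : b * g = B at hab ⊢
    omega
  rwa [hlen] at h

/-- for coprime `n, g` with `n ≥ 2g`, `g ≥ 1`, and `g + 1 ≤ k`,
`g + k - 1 ≤ n`, the digraph `H` is primitive and `exp(H) ≤ (n-1)g + n - 2g`. -/
theorem stmt10 (n g k : ℕ) (hg : 1 ≤ g) (hn : 2 * g ≤ n) (hco : Nat.Coprime n g)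
    (hk : g + 1 ≤ k) (hkg : g + k - 1 ≤ n) :
    IsPrimitive (Hgraph n g k) ∧
      (expnt (Hgraph n g k) : ℤ) ≤ ((n : ℤ) - 1) * g + n - 2 * g := by
  have hK1 : 1 ≤ (n - 1) * g + (n - 2 * g) := by
    have h1 : 1 ≤ (n - 1) * g := Nat.one_le_iff_ne_zero.2 (Nat.mul_ne_zero (by omega) (by omega))
    omega
  have hmem : ((n - 1) * g + (n - 2 * g)) ∈
      {k' | 1 ≤ k' ∧ ∀ u v, HasWalk (Hgraph n g k) k' u v} :=
    ⟨hK1, key n g k hg hn hco hk hkg⟩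
  refine ⟨⟨_, hmem.1, hmem.2⟩, ?_⟩
  have hle : expnt (Hgraph n g k) ≤ (n - 1) * g + (n - 2 * g) := Nat.sInf_le hmem
  have hcast : ((expnt (Hgraph n g k) : ℤ)) ≤ (((n - 1) * g + (n - 2 * g) : ℕ) : ℤ) := by
    exact_mod_cast hle
  have heq : (((n - 1) * g + (n - 2 * g) : ℕ) : ℤ) = ((n : ℤ) - 1) * g + n - 2 * g := by
    push_cast [Nat.cast_sub (show 1 ≤ n by omega), Nat.cast_sub hn]
    ring
  linarith [heq ▸ hcast]
end
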